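/- arXiv:2008.09107 — 2 statements merged into one kernel-verified Lean document; each statement's English description precedes it below -/
import Mathlib

section
/- (Lovász) For every finite digraph D and root r ∈ V(D), there exists a spanning subgraph H of D such that for every v ∈ V(D)−r, λ_D(r,v) = λ_H(r,v) = ϱ_H(v), where ϱ_H(v) is the in-degree of v in H. -/
attribute [local instance] Classical.propDecidable

/-- A finite digraph: edges `E` with tail and head maps (parallel edges allowed). -/
structure Digraph' (V E : Type) where
  tail : E → V
  head : E → V

namespace Digraph'

variable {V E : Type} [Fintype V] [Fintype E]

/-- `es` is a directed walk from `r` to `v`. -/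
def IsWalk (D : Digraph' V E) : V → V → List E → Prop
  | r, v, [] => r = v
  | r, v, e :: es => D.tail e = r ∧ D.IsWalk (D.head e) v es

/-- `es` is a directed path from `r` to `v` using only edges of `F`. -/
def IsPathIn (D : Digraph' V E) (F : Set E) (r v : V) (es : List E) : Prop :=
  D.IsWalk r v es ∧ (∀ e ∈ es, e ∈ F) ∧ (r :: es.map D.head).Nodup

/-- The members of a list of paths are pairwise edge-disjoint. -/
def EdgeDisjoint (P : List (List E)) : Prop :=
  P.Pairwise (fun p q => ∀ e, e ∈ p → e ∉ q)

/-- The maximum number of pairwise edge-disjoint `r → v` paths inside `F`. -/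
noncomputable def lam (D : Digraph' V E) (F : Set E) (r v : V) : ℕ :=
  sSup {k | ∃ P : List (List E), P.length = k ∧ (∀ p ∈ P, D.IsPathIn F r v p) ∧
    EdgeDisjoint P}

/-- The set of edges of `F` whose head is `v`. -/
def inEdges (D : Digraph' V E) (F : Set E) (v : V) : Set E := {e ∈ F | D.head e = v}

/-- The in-degree of `v` in the subgraph `F`. -/
noncomputable def indeg (D : Digraph' V E) (F : Set E) (v : V) : ℕ :=
  (D.inEdges F v).ncard

/-- `I` arises as the set of last edges of a system of pairwise edge-disjoint
`r → v` paths in `F` (membership in the gammoid `G_F(v)`). -/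
def InGammoid (D : Digraph' V E) (F : Set E) (r v : V) (I : Set E) : Prop :=
  ∃ P : List (List E), (∀ p ∈ P, D.IsPathIn F r v p) ∧ EdgeDisjoint P ∧
    I = {e | ∃ p ∈ P, p.getLast? = some e}

/-- `F` is an `r`-flame: the in-degree of each `v ≠ r` equals λ_F(r,v). -/
def IsFlame (D : Digraph' V E) (r : V) (F : Set E) : Prop :=
  ∀ v, v ≠ r → D.indeg F v = D.lam F r v

/-- Total of `x` on the in-edges of `v`. -/
noncomputable def inflow (D : Digraph' V E) (x : E → ℝ) (v : V) : ℝ :=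
  ∑ e, if D.head e = v then x e else 0

/-- Total of `x` on the out-edges of `v`. -/
noncomputable def outflow (D : Digraph' V E) (x : E → ℝ) (v : V) : ℝ :=
  ∑ e, if D.tail e = v then x e else 0

/-- Total of `x` on the edges entering the vertex set `W`. -/
noncomputable def rhoSet (D : Digraph' V E) (x : E → ℝ) (W : Set V) : ℝ :=
  ∑ e, if D.head e ∈ W ∧ D.tail e ∉ W then x e else 0

/-- `x` is a (nonnegative) `r → v` flow. -/
def IsFlow (D : Digraph' V E) (r v : V) (x : E → ℝ) : Prop :=
  (∀ e, 0 ≤ x e) ∧ (∀ u, u ≠ r → u ≠ v → D.inflow x u = D.outflow x u) ∧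
    D.inflow x r = 0 ∧ D.outflow x v = 0

/-- The flow-connectivity from `r` to `v` under capacity `c`. -/
noncomputable def lamF (D : Digraph' V E) (r v : V) (c : E → ℝ) : ℝ :=
  sSup {a | ∃ x, D.IsFlow r v x ∧ x ≤ c ∧ D.outflow x r = a}

/-- Characteristic vector of an edge. -/
noncomputable def chi (e : E) : E → ℝ := fun e' => if e' = e then 1 else 0

/-- Restriction of `x` to the in-edges of `v` (zero elsewhere). -/
noncomputable def restrictIn (D : Digraph' V E) (v : V) (x : E → ℝ) : E → ℝ :=
  fun e => if D.head e = v then x e else 0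

/-- The polygammoid `G_c(v)`: restrictions to the in-edges of `v`
of `r → v` flows bounded by `c`. -/
def polygammoid (D : Digraph' V E) (r v : V) (c : E → ℝ) : Set (E → ℝ) :=
  {s | ∃ x, D.IsFlow r v x ∧ x ≤ c ∧ D.restrictIn v x = s}

/-- `D` has no parallel edges. -/
def NoParallel (D : Digraph' V E) : Prop :=
  ∀ e e', D.tail e = D.tail e' → D.head e = D.head e' → e = e'

/-- `es` is a directed cycle. -/
def IsCycle (D : Digraph' V E) (es : List E) : Prop :=
  es ≠ [] ∧ ∃ u, D.IsWalk u u es ∧ (es.map D.head).Nodup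

/-- Characteristic vector of a list of edges. -/
noncomputable def charVec (es : List E) : E → ℝ :=
  fun e => ((es.filter (fun e' => e' = e)).length : ℝ)

end Digraph'


set_option linter.unusedSectionVars false

namespace Digraph'

variable {V E : Type} [Fintype V] [Fintype E] {D : Digraph' V E}

@[simp] lemma isWalk_nil {u v : V} : D.IsWalk u v [] ↔ u = v := Iff.rfl

@[simp] lemma isWalk_cons {u v : V} {e : E} {t : List E} :
    D.IsWalk u v (e :: t) ↔ D.tail e = u ∧ D.IsWalk (D.head e) v t := Iff.rfl

lemma isWalk_append {u m v : V} {p q : List E} (hp : D.IsWalk u m p) (hq : D.IsWalk m v q) :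
    D.IsWalk u v (p ++ q) := by
  induction p generalizing u with
  | nil => rw [isWalk_nil] at hp; subst hp; simpa using hq
  | cons e t ih => exact ⟨hp.1, ih hp.2⟩

lemma isWalk_getLast : ∀ (es : List E) (u v : V), D.IsWalk u v es →
    ∀ e, es.getLast? = some e → D.head e = v := by
  intro es
  induction es with
  | nil => intro u v _ e he; simp at he
  | cons a t ih =>
    intro u v hw e he
    cases t with
    | nil =>
      simp at he
      subst he
      exact hw.2
    | cons b t' =>
      rw [List.getLast?_cons_cons] at he
      exact ih _ v hw.2 e he

lemma suffix_walk_of_mem_head : ∀ (es : List E) (u v x : V), D.IsWalk u v es →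
    x ∈ es.map D.head → ∃ es', D.IsWalk x v es' ∧ es'.length < es.length ∧ ∀ e ∈ es', e ∈ es := by
  intro es
  induction es with
  | nil => simp
  | cons a t ih =>
    intro u v x hw hx
    rw [List.map_cons, List.mem_cons] at hx
    rcases hx with h | h
    · exact ⟨t, h ▸ hw.2, by simp, fun e he => List.mem_cons_of_mem _ he⟩
    · obtain ⟨es', h1, h2, h3⟩ := ih (D.head a) v x hw.2 h
      exact ⟨es', h1, by simp; omega, fun e he => List.mem_cons_of_mem _ (h3 e he)⟩

lemma shorten_of_dup : ∀ (es : List E) (u v : V), D.IsWalk u v es → ¬ (es.map D.head).Nodup →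
    ∃ es', D.IsWalk u v es' ∧ es'.length < es.length ∧ ∀ e ∈ es', e ∈ es := by
  intro es
  induction es with
  | nil => simp
  | cons a t ih =>
    intro u v hw hnd
    by_cases h : D.head a ∈ t.map D.head
    · obtain ⟨t', h1, h2, h3⟩ := suffix_walk_of_mem_head t (D.head a) v (D.head a) hw.2 h
      exact ⟨a :: t', ⟨hw.1, h1⟩, by simp; omega,
        fun e he => by rcases List.mem_cons.1 he with rfl | he
                       · exact List.mem_cons_self
                       · exact List.mem_cons_of_mem _ (h3 e he)⟩
    · have hnd' : ¬ (t.map D.head).Nodup := by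
        intro hc; exact hnd (by simpa [List.nodup_cons, h] using hc)
      obtain ⟨t', h1, h2, h3⟩ := ih (D.head a) v hw.2 hnd'
      exact ⟨a :: t', ⟨hw.1, h1⟩, by simp; omega,
        fun e he => by rcases List.mem_cons.1 he with rfl | he
                       · exact List.mem_cons_self
                       · exact List.mem_cons_of_mem _ (h3 e he)⟩

lemma exists_simple_path : ∀ (n : ℕ) (es : List E) (u v : V), es.length ≤ n → D.IsWalk u v es →
    ∃ p, D.IsWalk u v p ∧ (u :: p.map D.head).Nodup ∧ ∀ e ∈ p, e ∈ es := by
  intro n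
  induction n with
  | zero =>
    intro es u v h hw
    have : es = [] := List.length_eq_zero_iff.1 (Nat.le_zero.1 h)
    subst this
    exact ⟨[], hw, by simp, by simp⟩
  | succ n ih =>
    intro es u v h hw
    by_cases hnd : (u :: es.map D.head).Nodup
    · exact ⟨es, hw, hnd, fun _ he => he⟩
    · rw [List.nodup_cons] at hnd
      by_cases hu : u ∈ es.map D.head
      · obtain ⟨es', h1, h2, h3⟩ := suffix_walk_of_mem_head es u v u hw hu
        obtain ⟨p, p1, p2, p3⟩ := ih es' u v (by omega) h1
        exact ⟨p, p1, p2, fun e he => h3 e (p3 e he)⟩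
      · have hnd' : ¬ (es.map D.head).Nodup := fun hc => hnd ⟨hu, hc⟩
        obtain ⟨es', h1, h2, h3⟩ := shorten_of_dup es u v hw hnd'
        obtain ⟨p, p1, p2, p3⟩ := ih es' u v (by omega) h1
        exact ⟨p, p1, p2, fun e he => h3 e (p3 e he)⟩

end Digraph'


namespace Digraph'

variable {V E : Type} [Fintype V] [Fintype E] {D : Digraph' V E} {r v : V} {F : Set E}

lemma length_le_card (P : List (List E)) (T : Finset E) (hdisj : EdgeDisjoint P)
    (h : ∀ p ∈ P, ∃ e ∈ p, e ∈ T) : P.length ≤ T.card := by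
  induction P generalizing T with
  | nil => simp
  | cons p P ih =>
    obtain ⟨e, hep, heT⟩ := h p (List.mem_cons_self)
    have hP : P.length ≤ (T.erase e).card := by
      refine ih (T.erase e) (List.Pairwise.of_cons hdisj) ?_
      intro q hq
      obtain ⟨e', he'q, he'T⟩ := h q (List.mem_cons_of_mem _ hq)
      refine ⟨e', he'q, Finset.mem_erase.2 ⟨?_, he'T⟩⟩
      rintro rfl
      exact (List.rel_of_pairwise_cons hdisj hq) e' hep he'q
    have := Finset.card_erase_add_one heT
    simp only [List.length_cons]
    omega

lemma path_ne_nil (hvr : v ≠ r) {p : List E} (hp : D.IsPathIn F r v p) : p ≠ [] := by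
  rintro rfl
  have h := hp.1
  rw [isWalk_nil] at h
  exact hvr h.symm

lemma lamSet_le_card (hvr : v ≠ r) {k : ℕ}
    (hk : k ∈ {k | ∃ P : List (List E), P.length = k ∧ (∀ p ∈ P, D.IsPathIn F r v p) ∧
      EdgeDisjoint P}) : k ≤ Fintype.card E := by
  obtain ⟨P, rfl, hP, hd⟩ := hk
  have h2 := length_le_card P Finset.univ hd (fun p hp => by
    obtain ⟨e, he⟩ := List.exists_mem_of_ne_nil p (path_ne_nil hvr (hP p hp))
    exact ⟨e, he, Finset.mem_univ e⟩)
  simpa using h2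

lemma zero_mem_lamSet : 0 ∈ {k | ∃ P : List (List E), P.length = k ∧
    (∀ p ∈ P, D.IsPathIn F r v p) ∧ EdgeDisjoint P} :=
  ⟨[], rfl, by simp, List.Pairwise.nil⟩

lemma exists_max_system (hvr : v ≠ r) :
    ∃ P : List (List E), P.length = D.lam F r v ∧ (∀ p ∈ P, D.IsPathIn F r v p) ∧
      EdgeDisjoint P :=
  Nat.sSup_mem ⟨0, zero_mem_lamSet⟩ ⟨Fintype.card E, fun _ hk => lamSet_le_card hvr hk⟩

lemma le_lam (hvr : v ≠ r) {P : List (List E)} (hP : ∀ p ∈ P, D.IsPathIn F r v p)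
    (hd : EdgeDisjoint P) : P.length ≤ D.lam F r v :=
  le_csSup ⟨Fintype.card E, fun _ hk => lamSet_le_card hvr hk⟩ ⟨P, rfl, hP, hd⟩

lemma lam_le {n : ℕ}
    (h : ∀ P : List (List E), (∀ p ∈ P, D.IsPathIn F r v p) → EdgeDisjoint P → P.length ≤ n) :
    D.lam F r v ≤ n :=
  csSup_le ⟨0, zero_mem_lamSet⟩ (by rintro k ⟨P, rfl, hP, hd⟩; exact h P hP hd)

lemma isPathIn_mono {F' : Set E} (h : F ⊆ F') {p : List E} (hp : D.IsPathIn F r v p) :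
    D.IsPathIn F' r v p :=
  ⟨hp.1, fun e he => h (hp.2.1 e he), hp.2.2⟩

lemma lam_mono (hvr : v ≠ r) {F' : Set E} (h : F ⊆ F') : D.lam F r v ≤ D.lam F' r v := by
  obtain ⟨P, hlen, hP, hd⟩ := exists_max_system (D := D) (F := F) hvr
  rw [← hlen]
  exact le_lam hvr (fun p hp => isPathIn_mono h (hP p hp)) hd

noncomputable def inC (D : Digraph' V E) (S : Finset E) (x : V) : ℕ :=
  (S.filter (fun e => D.head e = x)).card

noncomputable def outC (D : Digraph' V E) (S : Finset E) (x : V) : ℕ :=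
  (S.filter (fun e => D.tail e = x)).card

noncomputable def cutE (D : Digraph' V E) (F : Set E) (W : Set V) : Finset E :=
  Finset.univ.filter (fun e => e ∈ F ∧ D.head e ∈ W ∧ D.tail e ∉ W)

noncomputable def inE (D : Digraph' V E) (F : Set E) (v : V) : Finset E :=
  Finset.univ.filter (fun e => e ∈ F ∧ D.head e = v)

lemma indeg_eq_card (F : Set E) (v : V) : D.indeg F v = (D.inE F v).card := by
  rw [indeg, Set.ncard_eq_toFinset_card']
  congr 1
  ext e
  rw [Set.mem_toFinset]
  simp [inEdges, inE]

lemma exists_crossing {W : Set V} : ∀ (es : List E) (u : V), D.IsWalk u v es → u ∉ W → v ∈ W →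
    ∃ e ∈ es, D.head e ∈ W ∧ D.tail e ∉ W := by
  intro es
  induction es with
  | nil =>
    intro u hw hu hv
    rw [isWalk_nil] at hw
    subst hw
    exact absurd hv hu
  | cons a t ih =>
    intro u hw hu hv
    by_cases h : D.head a ∈ W
    · exact ⟨a, List.mem_cons_self, h, hw.1 ▸ hu⟩
    · obtain ⟨e, h1, h2⟩ := ih (D.head a) hw.2 h hv
      exact ⟨e, List.mem_cons_of_mem _ h1, h2⟩

lemma lam_le_cut (hvr : v ≠ r) {W : Set V} (hrW : r ∉ W) (hvW : v ∈ W) :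
    D.lam F r v ≤ (D.cutE F W).card := by
  refine lam_le ?_
  intro P hP hd
  refine length_le_card P _ hd ?_
  intro p hp
  obtain ⟨e, he, h1, h2⟩ := exists_crossing p r (hP p hp).1 hrW hvW
  refine ⟨e, he, ?_⟩
  simp only [cutE, Finset.mem_filter, Finset.mem_univ, true_and]
  exact ⟨(hP p hp).2.1 e he, h1, h2⟩

lemma lam_le_indeg (hvr : v ≠ r) : D.lam F r v ≤ D.indeg F v := by
  rw [indeg_eq_card]
  refine lam_le ?_
  intro P hP hd
  refine length_le_card P _ hd ?_
  intro p hp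
  have hne := path_ne_nil hvr (hP p hp)
  refine ⟨p.getLast hne, List.getLast_mem hne, ?_⟩
  simp only [inE, Finset.mem_filter, Finset.mem_univ, true_and]
  exact ⟨(hP p hp).2.1 _ (List.getLast_mem hne),
    isWalk_getLast p r v (hP p hp).1 _ (List.getLast?_eq_getLast hne)⟩

lemma length_le_filter_not_mem (f : E) : ∀ (P : List (List E)), EdgeDisjoint P →
    P.length ≤ (P.filter (fun p => f ∉ p)).length + 1 := by
  intro P
  induction P with
  | nil => simp
  | cons p P ih =>
    intro hd
    by_cases h : f ∈ p
    · have heq : P.filter (fun p => f ∉ p) = P := by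
        rw [List.filter_eq_self]
        intro q hq
        simpa using (List.rel_of_pairwise_cons hd hq) f h
      have hstep : (p :: P).filter (fun p => f ∉ p) = P.filter (fun p => f ∉ p) := by
        rw [List.filter_cons]
        simp [h]
      rw [hstep, heq, List.length_cons]
    · have hih := ih (List.Pairwise.of_cons hd)
      have hstep : (p :: P).filter (fun p => f ∉ p) = p :: P.filter (fun p => f ∉ p) := by
        rw [List.filter_cons]
        simp [h]
      rw [hstep, List.length_cons, List.length_cons]
      omega

lemma lam_del_le (hvr : v ≠ r) (f : E) : D.lam F r v ≤ D.lam (F \ {f}) r v + 1 := by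
  obtain ⟨P, hlen, hP, hd⟩ := exists_max_system (D := D) (F := F) hvr
  rw [← hlen]
  have h2 : ∀ p ∈ P.filter (fun p => f ∉ p), D.IsPathIn (F \ {f}) r v p := by
    intro p hp
    rw [List.mem_filter] at hp
    have hp1 := hP p hp.1
    have hf : f ∉ p := by simpa using hp.2
    exact ⟨hp1.1, fun e he => ⟨hp1.2.1 e he, fun he' => hf ((Set.mem_singleton_iff.1 he') ▸ he)⟩,
      hp1.2.2⟩
  have h3 := le_lam hvr h2 (List.Pairwise.filter _ hd)
  have h4 := length_le_filter_not_mem f P hd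
  omega

end Digraph'


namespace Digraph'

set_option linter.unusedVariables false

variable {V E : Type} [Fintype V] [Fintype E] {D : Digraph' V E} {r v : V} {F : Set E}

lemma inC_insert {S : Finset E} {e : E} (he : e ∉ S) (x : V) :
    D.inC (insert e S) x = D.inC S x + if D.head e = x then 1 else 0 := by
  rw [inC, inC, Finset.filter_insert]
  split_ifs with h
  · rw [Finset.card_insert_of_notMem (fun hc => he (Finset.mem_filter.1 hc).1)]
  · simp

lemma outC_insert {S : Finset E} {e : E} (he : e ∉ S) (x : V) :
    D.outC (insert e S) x = D.outC S x + if D.tail e = x then 1 else 0 := by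
  rw [outC, outC, Finset.filter_insert]
  split_ifs with h
  · rw [Finset.card_insert_of_notMem (fun hc => he (Finset.mem_filter.1 hc).1)]
  · simp

lemma inC_erase {S : Finset E} {e : E} (he : e ∈ S) (x : V) :
    D.inC S x = D.inC (S.erase e) x + if D.head e = x then 1 else 0 := by
  conv_lhs => rw [← Finset.insert_erase he]
  rw [inC_insert (Finset.notMem_erase e S) x]

lemma outC_erase {S : Finset E} {e : E} (he : e ∈ S) (x : V) :
    D.outC S x = D.outC (S.erase e) x + if D.tail e = x then 1 else 0 := by
  conv_lhs => rw [← Finset.insert_erase he]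
  rw [outC_insert (Finset.notMem_erase e S) x]

lemma sum_inC (S : Finset E) : ∑ x, D.inC S x = S.card :=
  (Finset.card_eq_sum_card_fiberwise (fun e (_ : e ∈ S) => Finset.mem_univ (D.head e))).symm

lemma sum_outC (S : Finset E) : ∑ x, D.outC S x = S.card :=
  (Finset.card_eq_sum_card_fiberwise (fun e (_ : e ∈ S) => Finset.mem_univ (D.tail e))).symm

lemma flow_excess (hvr : v ≠ r) {S : Finset E}
    (hc : ∀ x, x ≠ r → x ≠ v → D.inC S x = D.outC S x) :
    D.inC S r + D.inC S v = D.outC S r + D.outC S v := by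
  have h1 := sum_inC (D := D) S
  have h2 := sum_outC (D := D) S
  have hv : v ∈ Finset.univ.erase r := Finset.mem_erase.2 ⟨hvr, Finset.mem_univ v⟩
  have h3 : ∑ x, D.inC S x =
      D.inC S r + (D.inC S v + ∑ x ∈ (Finset.univ.erase r).erase v, D.inC S x) := by
    rw [Finset.add_sum_erase _ _ hv, Finset.add_sum_erase _ _ (Finset.mem_univ r)]
  have h4 : ∑ x, D.outC S x =
      D.outC S r + (D.outC S v + ∑ x ∈ (Finset.univ.erase r).erase v, D.outC S x) := by
    rw [Finset.add_sum_erase _ _ hv, Finset.add_sum_erase _ _ (Finset.mem_univ r)]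
  have h5 : ∑ x ∈ (Finset.univ.erase r).erase v, D.inC S x =
      ∑ x ∈ (Finset.univ.erase r).erase v, D.outC S x := by
    refine Finset.sum_congr rfl ?_
    intro x hx
    rw [Finset.mem_erase, Finset.mem_erase] at hx
    exact hc x hx.2.1 hx.1
  omega

lemma exists_trail : ∀ (n : ℕ) (S : Finset E) (u : V), S.card ≤ n →
    D.outC S v = 0 →
    (∀ x, x ≠ u → x ≠ v → D.inC S x ≤ D.outC S x) →
    (u = v ∨ D.inC S u < D.outC S u) →
    ∃ es, D.IsWalk u v es ∧ es.Nodup ∧ ∀ e ∈ es, e ∈ S := by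
  intro n
  induction n with
  | zero =>
    intro S u hcard hv hc hu
    have hS : S = ∅ := Finset.card_eq_zero.1 (Nat.le_zero.1 hcard)
    subst hS
    rcases hu with rfl | hu
    · exact ⟨[], isWalk_nil.2 rfl, by simp, by simp⟩
    · simp [outC] at hu
  | succ n ih =>
    intro S u hcard hv hc hu
    rcases hu with rfl | hu
    · exact ⟨[], isWalk_nil.2 rfl, by simp, by simp⟩
    · have hout : 0 < D.outC S u := lt_of_le_of_lt (Nat.zero_le _) hu
      rw [outC, Finset.card_pos] at hout
      obtain ⟨e, he⟩ := hout
      rw [Finset.mem_filter] at he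
      have huv : u ≠ v := by
        rintro rfl
        have hmem : e ∈ S.filter (fun e' => D.tail e' = u) := Finset.mem_filter.2 ⟨he.1, he.2⟩
        rw [outC, Finset.card_eq_zero] at hv
        rw [hv] at hmem
        exact absurd hmem (Finset.notMem_empty e)
      have hvS' : D.outC (S.erase e) v = 0 :=
        Nat.le_zero.1 (hv ▸ Finset.card_le_card (Finset.filter_subset_filter _ (Finset.erase_subset e S)))
      have hie := fun x => D.inC_erase he.1 x
      have hoe := fun x => D.outC_erase he.1 x
      have hc' : ∀ x, x ≠ D.head e → x ≠ v → D.inC (S.erase e) x ≤ D.outC (S.erase e) x := by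
        intro x hx hxv
        have h1 := hie x
        have h2 := hoe x
        rw [if_neg (fun hh : D.head e = x => hx hh.symm)] at h1
        by_cases hxu : x = u
        · subst hxu
          rw [if_pos he.2] at h2
          omega
        · rw [if_neg (fun hh : D.tail e = x => hxu (hh.symm.trans he.2))] at h2
          have := hc x hxu hxv
          omega
      have hu' : D.head e = v ∨ D.inC (S.erase e) (D.head e) < D.outC (S.erase e) (D.head e) := by
        by_cases hev : D.head e = v
        · exact Or.inl hev
        · refine Or.inr ?_
          have h1 := hie (D.head e)
          have h2 := hoe (D.head e)
          rw [if_pos rfl] at h1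
          by_cases hgu : D.head e = u
          · rw [if_pos (he.2.trans hgu.symm)] at h2
            rw [hgu] at h1 h2 ⊢
            omega
          · rw [if_neg (fun hh : D.tail e = D.head e => hgu (hh.symm.trans he.2))] at h2
            have := hc (D.head e) hgu hev
            omega
      have hcard' : (S.erase e).card ≤ n := by
        have := Finset.card_erase_add_one he.1
        omega
      obtain ⟨es, h1, h2, h3⟩ := ih (S.erase e) (D.head e) hcard' hvS' hc' hu'
      refine ⟨e :: es, ⟨he.2, h1⟩, ?_, ?_⟩
      · rw [List.nodup_cons]
        exact ⟨fun hmem => Finset.notMem_erase e S (h3 e hmem), h2⟩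
      · intro e' he'
        rcases List.mem_cons.1 he' with rfl | he'
        · exact he.1
        · exact Finset.mem_of_mem_erase (h3 e' he')

end Digraph'


namespace Digraph'

set_option linter.unusedVariables false

variable {V E : Type} [Fintype V] [Fintype E] {D : Digraph' V E} {r v : V} {F : Set E}

noncomputable def hcnt (D : Digraph' V E) (p : List E) (x : V) : ℕ :=
  p.countP (fun e => D.head e = x)

noncomputable def tcnt (D : Digraph' V E) (p : List E) (x : V) : ℕ :=
  p.countP (fun e => D.tail e = x)

lemma hcnt_cons (e : E) (t : List E) (x : V) :
    D.hcnt (e :: t) x = D.hcnt t x + if D.head e = x then 1 else 0 := by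
  rw [hcnt, hcnt, List.countP_cons]
  by_cases h : D.head e = x
  · simp [h]
  · simp [h]

lemma tcnt_cons (e : E) (t : List E) (x : V) :
    D.tcnt (e :: t) x = D.tcnt t x + if D.tail e = x then 1 else 0 := by
  rw [tcnt, tcnt, List.countP_cons]
  by_cases h : D.tail e = x
  · simp [h]
  · simp [h]

lemma hcnt_notmem {p : List E} {x : V} (hx : x ∉ p.map D.head) : D.hcnt p x = 0 := by
  rw [hcnt, List.countP_eq_zero]
  intro e he
  simp only [decide_eq_true_eq]
  intro hh
  exact hx (hh ▸ List.mem_map_of_mem (f := D.head) he)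

lemma tcnt_zero_of_walk : ∀ (p : List E) (w : V), D.IsWalk w v p → ∀ x, x ∉ w :: p.map D.head →
    D.tcnt p x = 0 := by
  intro p
  induction p with
  | nil => intro w _ x _; rfl
  | cons e t ih =>
    intro w hw x hx
    simp only [List.map_cons, List.mem_cons, not_or] at hx
    rw [tcnt_cons, if_neg (fun hh : D.tail e = x => hx.1 (hh.symm.trans hw.1))]
    have := ih (D.head e) hw.2 x (by simp only [List.mem_cons, not_or]; exact ⟨hx.2.1, hx.2.2⟩)
    omega

lemma tcnt_start : ∀ (p : List E) (u : V), D.IsWalk u v p → u ∉ p.map D.head → p ≠ [] →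
    D.tcnt p u = 1 := by
  intro p u hw hu hne
  cases p with
  | nil => exact absurd rfl hne
  | cons e t =>
    rw [tcnt_cons, if_pos hw.1]
    have h0 : D.tcnt t u = 0 := by
      refine tcnt_zero_of_walk t (D.head e) hw.2 u ?_
      simp only [List.map_cons, List.mem_cons, not_or] at hu ⊢
      exact ⟨hu.1, hu.2⟩
    omega

lemma countP_eq_one_of_nodup {x : V} : ∀ (l : List V), l.Nodup → x ∈ l →
    l.countP (fun y => y = x) = 1 := by
  intro l
  induction l with
  | nil => simp
  | cons a t ih =>
    intro hnd hx
    rw [List.countP_cons]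
    rcases List.mem_cons.1 hx with rfl | hx
    · have h0 : t.countP (fun y => y = x) = 0 := by
        rw [List.countP_eq_zero]
        intro y hy
        simp only [decide_eq_true_eq]
        rintro rfl
        exact (List.nodup_cons.1 hnd).1 hy
      simp [h0]
    · have h1 := ih (List.nodup_cons.1 hnd).2 hx
      have hax : ¬ (a = x) := by rintro rfl; exact (List.nodup_cons.1 hnd).1 hx
      simp [h1, hax]

lemma hcnt_eq_countP_map (p : List E) (x : V) :
    D.hcnt p x = (p.map D.head).countP (fun y => y = x) := by
  rw [hcnt, List.countP_map]
  rfl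

lemma hcnt_mem_nodup {p : List E} {x : V} (hnd : (p.map D.head).Nodup)
    (hx : x ∈ p.map D.head) : D.hcnt p x = 1 := by
  rw [hcnt_eq_countP_map]
  exact countP_eq_one_of_nodup _ hnd hx

lemma path_consv : ∀ (p : List E) (u : V), D.IsWalk u v p → (u :: p.map D.head).Nodup →
    ∀ x, x ≠ u → x ≠ v → D.hcnt p x = D.tcnt p x := by
  intro p
  induction p with
  | nil => intro u _ _ x _ _; rfl
  | cons e t ih =>
    intro u hw hnd x hxu hxv
    rw [hcnt_cons, tcnt_cons, if_neg (fun hh : D.tail e = x => hxu (hh.symm.trans hw.1))]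
    have hnd2 : (D.head e :: t.map D.head).Nodup := by
      have := (List.nodup_cons.1 hnd).2
      simpa using this
    by_cases hx : D.head e = x
    · have htne : t ≠ [] := by
        rintro rfl
        have hv2 := hw.2
        rw [isWalk_nil] at hv2
        exact hxv (hx.symm.trans hv2)
      have h1 : D.hcnt t x = 0 := by
        refine hcnt_notmem ?_
        intro hmem
        exact (List.nodup_cons.1 hnd2).1 (hx ▸ hmem)
      have h2 : D.tcnt t x = 1 := by
        have := tcnt_start t (D.head e) hw.2 (List.nodup_cons.1 hnd2).1 htne
        rw [hx] at this
        exact this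
      rw [if_pos hx]
      omega
    · have := ih (D.head e) hw.2 hnd2 x (fun hh => hx hh.symm) hxv
      rw [if_neg hx]
      omega

lemma hcnt_end {p : List E} {u : V} (hw : D.IsWalk u v p) (hnd : (u :: p.map D.head).Nodup)
    (hne : p ≠ []) : D.hcnt p v = 1 := by
  have hvm : v ∈ p.map D.head := by
    have hg := isWalk_getLast p u v hw _ (List.getLast?_eq_getLast hne)
    exact hg ▸ List.mem_map_of_mem (f := D.head) (List.getLast_mem hne)
  exact hcnt_mem_nodup (List.nodup_cons.1 hnd).2 hvm

lemma card_toFinset_filter [DecidableEq E] {p : List E} (hnd : p.Nodup) (q : E → Prop)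
    [DecidablePred q] : (p.toFinset.filter (fun e => q e)).card = p.countP (fun e => q e) := by
  have h1 : p.toFinset.filter (fun e => q e) = (p.filter (fun e => q e)).toFinset := by
    ext e
    simp [List.mem_filter, decide_eq_true_eq]
  rw [h1, List.card_toFinset, List.dedup_eq_self.2 (hnd.filter _), List.countP_eq_length_filter]

lemma inC_sdiff_list {S : Finset E} {p : List E} (hsub : ∀ e ∈ p, e ∈ S) (hnd : p.Nodup)
    (x : V) : D.inC S x = D.inC (S \ p.toFinset) x + D.hcnt p x := by
  classical
  have hsplit : (S \ p.toFinset).filter (fun e => D.head e = x) =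
      (S.filter (fun e => D.head e = x)) \ p.toFinset := by
    ext e
    simp only [Finset.mem_filter, Finset.mem_sdiff]
    tauto
  have hinter : (S.filter (fun e => D.head e = x)) ∩ p.toFinset =
      p.toFinset.filter (fun e => D.head e = x) := by
    ext e
    simp only [Finset.mem_filter, Finset.mem_inter, List.mem_toFinset]
    constructor
    · rintro ⟨⟨h1, h2⟩, h3⟩; exact ⟨h3, h2⟩
    · rintro ⟨h1, h2⟩; exact ⟨⟨hsub e h1, h2⟩, h1⟩
  have hkey := Finset.card_sdiff_add_card_inter (S.filter (fun e => D.head e = x)) p.toFinset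
  rw [hinter] at hkey
  have hcc : (p.toFinset.filter (fun e => D.head e = x)).card = D.hcnt p x :=
    card_toFinset_filter hnd _
  rw [inC, inC, hsplit]
  omega

lemma outC_sdiff_list {S : Finset E} {p : List E} (hsub : ∀ e ∈ p, e ∈ S) (hnd : p.Nodup)
    (x : V) : D.outC S x = D.outC (S \ p.toFinset) x + D.tcnt p x := by
  classical
  have hsplit : (S \ p.toFinset).filter (fun e => D.tail e = x) =
      (S.filter (fun e => D.tail e = x)) \ p.toFinset := by
    ext e
    simp only [Finset.mem_filter, Finset.mem_sdiff]
    tauto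
  have hinter : (S.filter (fun e => D.tail e = x)) ∩ p.toFinset =
      p.toFinset.filter (fun e => D.tail e = x) := by
    ext e
    simp only [Finset.mem_filter, Finset.mem_inter, List.mem_toFinset]
    constructor
    · rintro ⟨⟨h1, h2⟩, h3⟩; exact ⟨h3, h2⟩
    · rintro ⟨h1, h2⟩; exact ⟨⟨hsub e h1, h2⟩, h1⟩
  have hkey := Finset.card_sdiff_add_card_inter (S.filter (fun e => D.tail e = x)) p.toFinset
  rw [hinter] at hkey
  have hcc : (p.toFinset.filter (fun e => D.tail e = x)).card = D.tcnt p x :=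
    card_toFinset_filter hnd _
  rw [outC, outC, hsplit]
  omega

lemma flow_decomp (hvr : v ≠ r) : ∀ (m : ℕ) (S : Finset E),
    (∀ x, x ≠ r → x ≠ v → D.inC S x = D.outC S x) → D.outC S v = 0 → D.inC S v = m →
    ∃ P : List (List E), P.length = m ∧ (∀ p ∈ P, D.IsPathIn (↑S) r v p) ∧ EdgeDisjoint P := by
  intro m
  induction m with
  | zero => intro S _ _ _; exact ⟨[], rfl, by simp, List.Pairwise.nil⟩
  | succ m ih =>
    intro S hc hv hm
    classical
    have hex := flow_excess hvr hc
    have hur : D.inC S r < D.outC S r := by omega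
    obtain ⟨es, hwes, hndes, hes⟩ := exists_trail S.card S r le_rfl hv
      (fun x hxr hxv => le_of_eq (hc x hxr hxv)) (Or.inr hur)
    obtain ⟨p, hp1, hp2, hp3⟩ := exists_simple_path es.length es r v le_rfl hwes
    have hpS : ∀ e ∈ p, e ∈ S := fun e he => hes e (hp3 e he)
    have hpne : p ≠ [] := by
      rintro rfl
      have h := hp1
      rw [isWalk_nil] at h
      exact hvr h.symm
    have hpnd : p.Nodup := List.Nodup.of_map D.head (List.nodup_cons.1 hp2).2
    have hin := fun x => D.inC_sdiff_list hpS hpnd x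
    have hout := fun x => D.outC_sdiff_list hpS hpnd x
    have hc' : ∀ x, x ≠ r → x ≠ v →
        D.inC (S \ p.toFinset) x = D.outC (S \ p.toFinset) x := by
      intro x hxr hxv
      have h1 := hin x
      have h2 := hout x
      have h3 := path_consv p r hp1 hp2 x hxr hxv
      have h4 := hc x hxr hxv
      omega
    have hv' : D.outC (S \ p.toFinset) v = 0 := by
      have h2 := hout v
      omega
    have hm' : D.inC (S \ p.toFinset) v = m := by
      have h1 := hin v
      have h5 := hcnt_end hp1 hp2 hpne
      omega
    obtain ⟨P, hPlen, hPpaths, hPdisj⟩ := ih (S \ p.toFinset) hc' hv' hm'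
    have hsub : (↑(S \ p.toFinset) : Set E) ⊆ (↑S : Set E) := by
      intro e he
      exact Finset.mem_coe.2 (Finset.mem_sdiff.1 (Finset.mem_coe.1 he)).1
    refine ⟨p :: P, by simp [hPlen], ?_, ?_⟩
    · intro q hq
      rcases List.mem_cons.1 hq with rfl | hq
      · exact ⟨hp1, fun e he => Finset.mem_coe.2 (hpS e he), hp2⟩
      · exact isPathIn_mono hsub (hPpaths q hq)
    · refine List.Pairwise.cons ?_ hPdisj
      intro q hq e hep heq
      have heq' : e ∈ (↑(S \ p.toFinset) : Set E) := (hPpaths q hq).2.1 e heq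
      have := (Finset.mem_sdiff.1 (Finset.mem_coe.1 heq')).2
      exact this (List.mem_toFinset.2 hep)

end Digraph'


namespace Digraph'

set_option linter.unusedVariables false

variable {V E : Type} [Fintype V] [Fintype E] {D : Digraph' V E} {r v : V} {F : Set E}
variable {S : Finset E}

noncomputable def Res (D : Digraph' V E) : Digraph' V (E ⊕ E) where
  tail := Sum.elim D.tail D.head
  head := Sum.elim D.head D.tail

def okArc (F : Set E) (S : Finset E) : E ⊕ E → Prop
  | Sum.inl e => e ∈ F ∧ e ∉ S
  | Sum.inr e => e ∈ S

@[simp] lemma res_tail_inl (e : E) : D.Res.tail (Sum.inl e) = D.tail e := rfl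
@[simp] lemma res_head_inl (e : E) : D.Res.head (Sum.inl e) = D.head e := rfl
@[simp] lemma res_tail_inr (e : E) : D.Res.tail (Sum.inr e) = D.head e := rfl
@[simp] lemma res_head_inr (e : E) : D.Res.head (Sum.inr e) = D.tail e := rfl

def reach (D : Digraph' V E) (F : Set E) (S : Finset E) (r x : V) : Prop :=
  ∃ ws, D.Res.IsWalk r x ws ∧ ∀ a ∈ ws, okArc F S a

lemma reach_refl : D.reach F S r r := ⟨[], isWalk_nil.2 rfl, by simp⟩

lemma reach_step {x : V} (h : D.reach F S r x) {a : E ⊕ E} (ha : okArc F S a)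
    (hx : D.Res.tail a = x) : D.reach F S r (D.Res.head a) := by
  obtain ⟨ws, h1, h2⟩ := h
  refine ⟨ws ++ [a], isWalk_append h1 ⟨hx, isWalk_nil.2 rfl⟩, ?_⟩
  intro b hb
  rcases List.mem_append.1 hb with hb | hb
  · exact h2 b hb
  · rw [List.mem_singleton] at hb
    exact hb ▸ ha

lemma augment (hvr : v ≠ r) :
    ∀ (π : List (E ⊕ E)) (u : V) (S : Finset E) (m : ℕ),
    D.Res.IsWalk u v π → (u :: π.map D.Res.head).Nodup → r ∉ π.map D.Res.head →
    (∀ a ∈ π, okArc F S a) → ↑S ⊆ F →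
    (∀ x, x ≠ r → x ≠ v → x ≠ u → D.inC S x = D.outC S x) →
    D.outC S v = 0 →
    (if u = v then D.inC S v = m + 1
     else (D.inC S v = m ∧ (u = r ∨ D.inC S u = D.outC S u + 1))) →
    ∃ S' : Finset E, ↑S' ⊆ F ∧ (∀ x, x ≠ r → x ≠ v → D.inC S' x = D.outC S' x) ∧
      D.outC S' v = 0 ∧ D.inC S' v = m + 1 := by
  intro π
  induction π with
  | nil =>
    intro u S m hw hnd hr hok hSF hcons hv hif
    rw [isWalk_nil] at hw
    subst hw
    rw [if_pos rfl] at hif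
    exact ⟨S, hSF, fun x hxr hxv => hcons x hxr hxv hxv, hv, hif⟩
  | cons a π ih =>
    intro u S m hw hnd hr hok hSF hcons hv hif
    obtain ⟨hta, hw'⟩ := hw
    have hmap : (a :: π).map D.Res.head = D.Res.head a :: π.map D.Res.head := by simp
    have hvm1 : D.Res.head a ∈ (a :: π).map D.Res.head := by
      rw [hmap]; exact List.mem_cons_self
    have huv : u ≠ v := by
      rintro rfl
      have hne : (a :: π) ≠ [] := by simp
      have hg := isWalk_getLast (a :: π) u u (⟨hta, hw'⟩ : D.Res.IsWalk u u (a :: π)) _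
        (List.getLast?_eq_getLast hne)
      have hvm : u ∈ (a :: π).map D.Res.head :=
        hg ▸ List.mem_map_of_mem (f := D.Res.head) (List.getLast_mem hne)
      exact (List.nodup_cons.1 hnd).1 hvm
    rw [if_neg huv] at hif
    obtain ⟨hmv, hexc⟩ := hif
    have hu1r : D.Res.head a ≠ r := fun h => hr (h ▸ hvm1)
    have hu1u : D.Res.head a ≠ u := fun h => (List.nodup_cons.1 hnd).1 (h ▸ hvm1)
    have hndπ : (a :: π).Nodup := List.Nodup.of_map D.Res.head (List.nodup_cons.1 hnd).2
    have haπ : a ∉ π := (List.nodup_cons.1 hndπ).1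
    have hnd' : (D.Res.head a :: π.map D.Res.head).Nodup := by
      rw [hmap] at hnd
      exact (List.nodup_cons.1 hnd).2
    have hr' : r ∉ π.map D.Res.head := fun h => hr (hmap ▸ List.mem_cons_of_mem _ h)
    cases a with
    | inl e =>
      obtain ⟨heF, heS⟩ : e ∈ F ∧ e ∉ S := hok _ (List.mem_cons_self)
      have hte : D.tail e = u := hta
      have hhe : D.head e = D.Res.head (Sum.inl e) := rfl
      have hiins := fun x => inC_insert (D := D) heS x
      have hoins := fun x => outC_insert (D := D) heS x
      refine ih (D.Res.head (Sum.inl e)) (insert e S) m hw' hnd' hr' ?_ ?_ ?_ ?_ ?_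
      · intro b hb
        have hok' := hok b (List.mem_cons_of_mem _ hb)
        cases b with
        | inl g =>
          refine ⟨hok'.1, ?_⟩
          intro hg
          rcases Finset.mem_insert.1 hg with rfl | hg
          · exact haπ hb
          · exact hok'.2 hg
        | inr g => exact Finset.mem_insert_of_mem hok'
      · intro g hg
        rcases Finset.mem_insert.1 (Finset.mem_coe.1 hg) with rfl | hg
        · exact heF
        · exact hSF (Finset.mem_coe.2 hg)
      · intro x hxr hxv hxu1
        have h1 := hiins x
        have h2 := hoins x
        rw [if_neg (fun hh : D.head e = x => hxu1 (hh.symm.trans hhe))] at h1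
        by_cases hxu : x = u
        · subst hxu
          rw [if_pos hte] at h2
          rcases hexc with hur | hexc
          · exact absurd hur hxr
          · omega
        · rw [if_neg (fun hh : D.tail e = x => hxu (hh.symm.trans hte))] at h2
          have := hcons x hxr hxv hxu
          omega
      · have h2 := hoins v
        rw [if_neg (fun hh : D.tail e = v => huv (hte.symm.trans hh))] at h2
        omega
      · by_cases h5 : D.Res.head (Sum.inl e) = v
        · rw [if_pos h5]
          have h1 := hiins v
          rw [if_pos (hhe.trans h5)] at h1
          omega
        · rw [if_neg h5]
          constructor
          · have h1 := hiins v
            rw [if_neg (fun hh : D.head e = v => h5 (hhe.symm.trans hh))] at h1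
            omega
          · right
            have h1 := hiins (D.Res.head (Sum.inl e))
            have h2 := hoins (D.Res.head (Sum.inl e))
            rw [if_pos hhe] at h1
            rw [if_neg (fun hh : D.tail e = D.Res.head (Sum.inl e) =>
              hu1u (hh.symm.trans hte))] at h2
            have h3 := hcons (D.Res.head (Sum.inl e)) hu1r h5 hu1u
            omega
    | inr e =>
      have heS : e ∈ S := hok _ (List.mem_cons_self)
      have hhe : D.head e = u := hta
      have hte : D.tail e = D.Res.head (Sum.inr e) := rfl
      have hie := fun x => inC_erase (D := D) heS x
      have hoe := fun x => outC_erase (D := D) heS x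
      have hu1v : D.Res.head (Sum.inr e) ≠ v := by
        intro h
        have hmem : e ∈ S.filter (fun e' => D.tail e' = v) :=
          Finset.mem_filter.2 ⟨heS, hte.trans h⟩
        rw [outC, Finset.card_eq_zero] at hv
        rw [hv] at hmem
        exact absurd hmem (Finset.notMem_empty e)
      refine ih (D.Res.head (Sum.inr e)) (S.erase e) m hw' hnd' hr' ?_ ?_ ?_ ?_ ?_
      · intro b hb
        have hok' := hok b (List.mem_cons_of_mem _ hb)
        cases b with
        | inl g => exact ⟨hok'.1, fun hg => hok'.2 (Finset.mem_of_mem_erase hg)⟩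
        | inr g =>
          refine Finset.mem_erase.2 ⟨?_, hok'⟩
          rintro rfl
          exact haπ hb
      · intro g hg
        exact hSF (Finset.mem_coe.2 (Finset.mem_of_mem_erase (Finset.mem_coe.1 hg)))
      · intro x hxr hxv hxu1
        have h1 := hie x
        have h2 := hoe x
        rw [if_neg (fun hh : D.tail e = x => hxu1 (hh.symm.trans hte))] at h2
        by_cases hxu : x = u
        · subst hxu
          rw [if_pos hhe] at h1
          rcases hexc with hur | hexc
          · exact absurd hur hxr
          · omega
        · rw [if_neg (fun hh : D.head e = x => hxu (hh.symm.trans hhe))] at h1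
          have := hcons x hxr hxv hxu
          omega
      · have h2 := hoe v
        rw [if_neg (fun hh : D.tail e = v => hu1v (hte.symm.trans hh))] at h2
        omega
      · rw [if_neg hu1v]
        constructor
        · have h1 := hie v
          rw [if_neg (fun hh : D.head e = v => huv (hhe.symm.trans hh))] at h1
          omega
        · right
          have h1 := hie (D.Res.head (Sum.inr e))
          have h2 := hoe (D.Res.head (Sum.inr e))
          rw [if_neg (fun hh : D.head e = D.Res.head (Sum.inr e) =>
            hu1u (hh.symm.trans hhe))] at h1
          rw [if_pos hte] at h2
          have h3 := hcons (D.Res.head (Sum.inr e)) hu1r hu1v hu1u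
          have h4 : 0 < D.outC S (D.Res.head (Sum.inr e)) := by
            rw [outC, Finset.card_pos]
            exact ⟨e, Finset.mem_filter.2 ⟨heS, hte⟩⟩
          omega

lemma exists_mincut (hvr : v ≠ r) (F : Set E) :
    ∃ W : Set V, v ∈ W ∧ r ∉ W ∧ (D.cutE F W).card ≤ D.lam F r v := by
  classical
  set Fl := {m | ∃ S : Finset E, ↑S ⊆ F ∧ (∀ x, x ≠ r → x ≠ v → D.inC S x = D.outC S x) ∧
    D.outC S v = 0 ∧ D.inC S v = m} with hFl
  have h0 : 0 ∈ Fl := ⟨∅, by simp, fun x _ _ => by simp [inC, outC],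
    by simp [outC], by simp [inC]⟩
  have hbdd : BddAbove Fl := by
    refine ⟨Fintype.card E, ?_⟩
    rintro m ⟨S, _, _, _, rfl⟩
    calc D.inC S v ≤ S.card := Finset.card_le_card (Finset.filter_subset _ _)
    _ ≤ Fintype.card E := Finset.card_le_univ S
  obtain ⟨S, hSF, hc, hv0, hM⟩ := Nat.sSup_mem ⟨0, h0⟩ hbdd
  have hnreach : ¬ D.reach F S r v := by
    rintro ⟨ws, hws, hok⟩
    obtain ⟨π, hπ1, hπ2, hπ3⟩ := exists_simple_path ws.length ws r v le_rfl hws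
    have hok' : ∀ a ∈ π, okArc F S a := fun a ha => hok a (hπ3 a ha)
    have hrπ : r ∉ π.map (D.Res).head := (List.nodup_cons.1 hπ2).1
    have hif : if r = v then D.inC S v = sSup Fl + 1 else
        (D.inC S v = sSup Fl ∧ (r = r ∨ D.inC S r = D.outC S r + 1)) := by
      rw [if_neg (Ne.symm hvr)]
      exact ⟨hM, Or.inl rfl⟩
    obtain ⟨S', h1, h2, h3, h4⟩ := augment hvr π r S (sSup Fl) hπ1 hπ2 hrπ hok' hSF
      (fun x hx1 hx2 _ => hc x hx1 hx2) hv0 hif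
    have hmem : sSup Fl + 1 ∈ Fl := ⟨S', h1, h2, h3, h4⟩
    have := le_csSup hbdd hmem
    omega
  set W := {x : V | ¬ D.reach F S r x} with hW
  have hWiff : ∀ x, x ∈ W ↔ ¬ D.reach F S r x := fun x => Iff.rfl
  refine ⟨W, hnreach, fun hcon => hcon reach_refl, ?_⟩
  have fact1 : ∀ e, e ∈ F → D.head e ∈ W → D.tail e ∉ W → e ∈ S := by
    intro e heF hh ht
    by_contra heS
    have hreach : D.reach F S r (D.tail e) := not_not.1 ht
    exact hh (reach_step hreach (a := Sum.inl e) ⟨heF, heS⟩ rfl)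
  have fact2 : ∀ e, e ∈ S → D.head e ∉ W → D.tail e ∉ W := by
    intro e heS hh
    have hreach : D.reach F S r (D.head e) := not_not.1 hh
    exact fun hcon => hcon (reach_step hreach (a := Sum.inr e) heS rfl)
  set Wf := Finset.univ.filter (fun x => x ∈ W) with hWf
  have hvWf : v ∈ Wf := Finset.mem_filter.2 ⟨Finset.mem_univ v, hnreach⟩
  have hrW : r ∉ W := fun hcon => hcon reach_refl
  have hsum_in : (S.filter (fun e => D.head e ∈ W)).card = ∑ x ∈ Wf, D.inC S x := by
    rw [Finset.card_eq_sum_card_fiberwise (f := D.head) (t := Wf)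
      (fun e he => Finset.mem_filter.2 ⟨Finset.mem_univ _, (Finset.mem_filter.1 he).2⟩)]
    refine Finset.sum_congr rfl ?_
    intro x hx
    rw [inC]
    congr 1
    ext e
    simp only [Finset.mem_filter]
    constructor
    · rintro ⟨⟨h1, h2⟩, h3⟩; exact ⟨h1, h3⟩
    · rintro ⟨h1, h2⟩; exact ⟨⟨h1, h2 ▸ (Finset.mem_filter.1 hx).2⟩, h2⟩
  have hsum_out : (S.filter (fun e => D.tail e ∈ W)).card = ∑ x ∈ Wf, D.outC S x := by
    rw [Finset.card_eq_sum_card_fiberwise (f := D.tail) (t := Wf)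
      (fun e he => Finset.mem_filter.2 ⟨Finset.mem_univ _, (Finset.mem_filter.1 he).2⟩)]
    refine Finset.sum_congr rfl ?_
    intro x hx
    rw [outC]
    congr 1
    ext e
    simp only [Finset.mem_filter]
    constructor
    · rintro ⟨⟨h1, h2⟩, h3⟩; exact ⟨h1, h3⟩
    · rintro ⟨h1, h2⟩; exact ⟨⟨h1, h2 ▸ (Finset.mem_filter.1 hx).2⟩, h2⟩
  have hsplit_in := Finset.card_filter_add_card_filter_not
    (p := fun e => D.tail e ∈ W) (s := S.filter (fun e => D.head e ∈ W))
  have hsplit_out := Finset.card_filter_add_card_filter_not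
    (p := fun e => D.head e ∈ W) (s := S.filter (fun e => D.tail e ∈ W))
  rw [Finset.filter_filter] at hsplit_in hsplit_out
  rw [Finset.filter_filter] at hsplit_in hsplit_out
  have hB : S.filter (fun e => D.tail e ∈ W ∧ ¬ D.head e ∈ W) = ∅ := by
    rw [Finset.filter_eq_empty_iff]
    rintro e he ⟨ht, hh⟩
    exact (fact2 e he hh) ht
  have hcomm : S.filter (fun e => D.tail e ∈ W ∧ D.head e ∈ W) =
      S.filter (fun e => D.head e ∈ W ∧ D.tail e ∈ W) := by
    ext e
    simp only [Finset.mem_filter]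
    tauto
  have hWsum : ∑ x ∈ Wf, D.inC S x = sSup Fl + ∑ x ∈ Wf, D.outC S x := by
    have h1 : D.inC S v + ∑ x ∈ Wf.erase v, D.inC S x = ∑ x ∈ Wf, D.inC S x :=
      Finset.add_sum_erase _ _ hvWf
    have h2 : D.outC S v + ∑ x ∈ Wf.erase v, D.outC S x = ∑ x ∈ Wf, D.outC S x :=
      Finset.add_sum_erase _ _ hvWf
    have h3 : ∑ x ∈ Wf.erase v, D.inC S x = ∑ x ∈ Wf.erase v, D.outC S x := by
      refine Finset.sum_congr rfl ?_
      intro x hx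
      have hx1 := Finset.mem_erase.1 hx
      have hx2 : x ∈ W := (Finset.mem_filter.1 hx1.2).2
      exact hc x (fun hh => hrW (hh ▸ hx2)) hx1.1
    omega
  have hBc : (S.filter (fun e => D.tail e ∈ W ∧ ¬ D.head e ∈ W)).card = 0 := by
    rw [hB]
    rfl
  have hcc := congrArg Finset.card hcomm
  have hA : (S.filter (fun e => D.head e ∈ W ∧ ¬ D.tail e ∈ W)).card = sSup Fl := by
    omega
  have hsubcut : D.cutE F W ⊆ S.filter (fun e => D.head e ∈ W ∧ ¬ D.tail e ∈ W) := by
    intro e he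
    simp only [cutE, Finset.mem_filter, Finset.mem_univ, true_and] at he
    exact Finset.mem_filter.2 ⟨fact1 e he.1 he.2.1 he.2.2, he.2.1, he.2.2⟩
  obtain ⟨P, hPl, hPp, hPd⟩ := flow_decomp hvr (sSup Fl) S hc hv0 hM
  have hlam : sSup Fl ≤ D.lam F r v := by
    rw [← hPl]
    exact le_lam hvr (fun p hp => isPathIn_mono hSF (hPp p hp)) hPd
  calc (D.cutE F W).card ≤ (S.filter (fun e => D.head e ∈ W ∧ ¬ D.tail e ∈ W)).card :=
        Finset.card_le_card hsubcut
  _ = sSup Fl := hA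
  _ ≤ D.lam F r v := hlam

end Digraph'


namespace Digraph'

set_option linter.unusedSectionVars false
set_option linter.unusedVariables false

variable {V E : Type} [Fintype V] [Fintype E] {D : Digraph' V E} {r v : V} {F : Set E}

lemma cut_submod (F : Set E) (A B : Set V) :
    (D.cutE F (A ∪ B)).card + (D.cutE F (A ∩ B)).card ≤
      (D.cutE F A).card + (D.cutE F B).card := by
  classical
  rw [cutE, cutE, cutE, cutE, Finset.card_filter, Finset.card_filter, Finset.card_filter,
    Finset.card_filter, ← Finset.sum_add_distrib, ← Finset.sum_add_distrib]
  refine Finset.sum_le_sum ?_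
  intro e _
  by_cases hF : e ∈ F <;>
  by_cases h1 : D.head e ∈ A <;>
  by_cases h2 : D.head e ∈ B <;>
  by_cases h3 : D.tail e ∈ A <;>
  by_cases h4 : D.tail e ∈ B <;>
  simp [Set.mem_union, Set.mem_inter_iff, hF, h1, h2, h3, h4]

lemma cutE_le_sdiff_add {f : E} {W : Set V} :
    (D.cutE F W).card ≤ (D.cutE (F \ {f}) W).card + 1 := by
  have hsub : D.cutE F W ⊆ insert f (D.cutE (F \ {f}) W) := by
    intro e he
    simp only [cutE, Finset.mem_filter, Finset.mem_univ, true_and] at he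
    by_cases hef : e = f
    · exact Finset.mem_insert.2 (Or.inl hef)
    · refine Finset.mem_insert.2 (Or.inr ?_)
      simp only [cutE, Finset.mem_filter, Finset.mem_univ, true_and]
      exact ⟨⟨he.1, fun hc => hef (Set.mem_singleton_iff.1 hc)⟩, he.2.1, he.2.2⟩
  calc (D.cutE F W).card ≤ (insert f (D.cutE (F \ {f}) W)).card := Finset.card_le_card hsub
  _ ≤ (D.cutE (F \ {f}) W).card + 1 := Finset.card_insert_le _ _

lemma cross_of_cut_lt {f : E} {W : Set V}
    (h : (D.cutE (F \ {f}) W).card < (D.cutE F W).card) :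
    f ∈ F ∧ D.head f ∈ W ∧ D.tail f ∉ W := by
  by_contra hcon
  have heq : D.cutE F W = D.cutE (F \ {f}) W := by
    ext e
    simp only [cutE, Finset.mem_filter, Finset.mem_univ, true_and]
    constructor
    · rintro ⟨h1, h2, h3⟩
      refine ⟨⟨h1, ?_⟩, h2, h3⟩
      intro hef
      rw [Set.mem_singleton_iff] at hef
      subst hef
      exact hcon ⟨h1, h2, h3⟩
    · rintro ⟨⟨h1, _⟩, h2, h3⟩
      exact ⟨h1, h2, h3⟩
  rw [heq] at h
  omega

lemma last_of_head_eq : ∀ (p : List E) (u : V), D.IsWalk u v p → (u :: p.map D.head).Nodup →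
    ∀ e ∈ p, D.head e = v → p.getLast? = some e := by
  intro p
  induction p with
  | nil => intro u _ _ e he; exact absurd he List.not_mem_nil
  | cons a t ih =>
    intro u hw hnd e he hev
    have hnd2 : (D.head a :: t.map D.head).Nodup := by
      have := (List.nodup_cons.1 hnd).2
      simpa using this
    rcases List.mem_cons.1 he with rfl | he
    · have ht : t = [] := by
        by_contra htne
        have hg := isWalk_getLast t (D.head e) v hw.2 _ (List.getLast?_eq_getLast htne)
        have hvm : v ∈ t.map D.head :=
          hg ▸ List.mem_map_of_mem (f := D.head) (List.getLast_mem htne)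
        exact (List.nodup_cons.1 hnd2).1 (hev ▸ hvm)
      subst ht
      rfl
    · have htne : t ≠ [] := List.ne_nil_of_mem he
      cases t with
      | nil => exact absurd rfl htne
      | cons b t' =>
        rw [List.getLast?_cons_cons]
        exact ih (D.head a) hw.2 hnd2 e he hev

lemma core (hvr : v ≠ r) (F : Set E) (hlt : D.lam F r v < D.indeg F v) :
    ∃ f, f ∈ F ∧ D.head f = v ∧ ∀ w, w ≠ r → D.lam (F \ {f}) r w = D.lam F r w := by
  classical
  obtain ⟨P, hPl, hPp, hPd⟩ := exists_max_system (D := D) (F := F) hvr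
  have hexists : ∃ f, (f ∈ F ∧ D.head f = v) ∧ ∀ p ∈ P, f ∉ p := by
    by_contra hcon
    push_neg at hcon
    have hsub : D.inE F v ⊆ (P.filterMap (fun p => p.getLast?)).toFinset := by
      intro f hf
      simp only [inE, Finset.mem_filter, Finset.mem_univ, true_and] at hf
      obtain ⟨p, hp, hfp⟩ := hcon f hf
      have hlast := last_of_head_eq p r (hPp p hp).1 (hPp p hp).2.2 f hfp hf.2
      rw [List.mem_toFinset, List.mem_filterMap]
      exact ⟨p, hp, hlast⟩
    have hcard := Finset.card_le_card hsub
    have h1 : (P.filterMap (fun p => p.getLast?)).toFinset.card ≤ P.length :=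
      le_trans (List.toFinset_card_le _) (List.length_filterMap_le _ _)
    rw [indeg_eq_card] at hlt
    omega
  obtain ⟨f, ⟨hfF, hfv⟩, hfP⟩ := hexists
  refine ⟨f, hfF, hfv, ?_⟩
  intro w hwr
  by_contra hne
  have hmono : D.lam (F \ {f}) r w ≤ D.lam F r w :=
    lam_mono hwr Set.diff_subset
  have hdel := lam_del_le (D := D) (F := F) hwr f
  have hlt2 : D.lam (F \ {f}) r w + 1 = D.lam F r w := by omega
  obtain ⟨W, hWw, hWr, hWcut⟩ := exists_mincut (D := D) hwr (F \ {f})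
  have heasy := lam_le_cut (D := D) (F := F) hwr (W := W) hWr hWw
  have hcutle := cutE_le_sdiff_add (D := D) (F := F) (f := f) (W := W)
  have hcross : f ∈ F ∧ D.head f ∈ W ∧ D.tail f ∉ W := cross_of_cut_lt (by omega)
  have hvW : v ∈ W := hfv ▸ hcross.2.1
  have htfW : D.tail f ∉ W := hcross.2.2
  have hsubclaim : ∀ A : Set V, v ∈ A → r ∉ A → (D.cutE F A).card ≤ D.lam F r v →
      D.tail f ∈ A := by
    intro A hvA hrA hAcut
    by_contra htA
    have hfA : f ∈ D.cutE F A := by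
      simp only [cutE, Finset.mem_filter, Finset.mem_univ, true_and]
      exact ⟨hfF, hfv ▸ hvA, htA⟩
    have h2 : D.lam F r v ≤ ((D.cutE F A).erase f).card := by
      rw [← hPl]
      refine length_le_card P _ hPd ?_
      intro p hp
      obtain ⟨e, he1, he2, he3⟩ := exists_crossing p r (hPp p hp).1 hrA hvA
      refine ⟨e, he1, Finset.mem_erase.2 ⟨fun hef => hfP p hp (hef ▸ he1), ?_⟩⟩
      simp only [cutE, Finset.mem_filter, Finset.mem_univ, true_and]
      exact ⟨(hPp p hp).2.1 e he1, he2, he3⟩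
    have h3 := Finset.card_erase_add_one hfA
    omega
  obtain ⟨A, hAv, hAr, hAcut⟩ := exists_mincut (D := D) hvr F
  have hsm := cut_submod (D := D) F A W
  have hUB : D.lam F r w ≤ (D.cutE F (A ∪ W)).card :=
    lam_le_cut hwr (fun hc => hc.elim hAr hWr) (Set.mem_union_right _ hWw)
  have hAIW : (D.cutE F (A ∩ W)).card ≤ D.lam F r v := by
    have hIB : D.lam F r v ≤ (D.cutE F (A ∩ W)).card :=
      lam_le_cut hvr (fun hc => hAr hc.1) ⟨hAv, hvW⟩
    omega
  have htail := hsubclaim (A ∩ W) ⟨hAv, hvW⟩ (fun h => hAr h.1) hAIW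
  exact htfW htail.2

lemma main_iter (D : Digraph' V E) (r : V) : ∀ (n : ℕ) (F : Finset E), F.card ≤ n →
    ∃ H : Set E, ∀ w, w ≠ r → D.lam H r w = D.lam (↑F) r w ∧ D.lam H r w = D.indeg H w := by
  intro n
  induction n with
  | zero =>
    intro F hF
    have hFe : F = ∅ := Finset.card_eq_zero.1 (Nat.le_zero.1 hF)
    subst hFe
    refine ⟨(↑(∅ : Finset E) : Set E), ?_⟩
    intro w hwr
    refine ⟨rfl, ?_⟩
    have hle := lam_le_indeg (D := D) (F := (↑(∅ : Finset E) : Set E)) (v := w) hwr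
    have hze : D.indeg (↑(∅ : Finset E)) w = 0 := by
      rw [indeg_eq_card]
      have : D.inE (↑(∅ : Finset E)) w = ∅ := by
        ext e
        simp [inE]
      rw [this]
      rfl
    omega
  | succ n ih =>
    intro F hF
    by_cases hex : ∃ v, v ≠ r ∧ D.lam (↑F) r v < D.indeg (↑F) v
    · obtain ⟨v, hvr, hlt⟩ := hex
      obtain ⟨f, hfF, hfv, hpres⟩ := core hvr ((↑F : Set E)) hlt
      have hcoe : (↑(F.erase f) : Set E) = (↑F : Set E) \ {f} := by
        simp [Finset.coe_erase]
      have hfF' : f ∈ F := hfF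
      have hcard : (F.erase f).card ≤ n := by
        have := Finset.card_erase_add_one hfF'
        omega
      obtain ⟨H, hH⟩ := ih (F.erase f) hcard
      refine ⟨H, ?_⟩
      intro w hwr
      obtain ⟨h1, h2⟩ := hH w hwr
      rw [hcoe] at h1
      exact ⟨h1.trans (hpres w hwr), h2⟩
    · push_neg at hex
      refine ⟨(↑F : Set E), fun w hwr => ⟨rfl, ?_⟩⟩
      have h1 := lam_le_indeg (D := D) (F := (↑F : Set E)) (v := w) hwr
      have h2 := hex w hwr
      omega

end Digraph'

open Digraph' in
/-- Lovász' theorem: there is a spanning subgraph `H` with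
`λ_D(r,v) = λ_H(r,v) = ϱ_H(v)` for every `v ≠ r`. -/
theorem stmt3 {V E : Type} [Fintype V] [Fintype E] (D : Digraph' V E) (r : V)
    (hr : ∀ e, D.head e ≠ r) :
    ∃ H : Set E, ∀ v, v ≠ r →
      D.lam Set.univ r v = D.lam H r v ∧ D.lam H r v = D.indeg H v := by
  obtain ⟨H, hH⟩ := main_iter D r Finset.univ.card Finset.univ le_rfl
  refine ⟨H, ?_⟩
  intro v hv
  obtain ⟨h1, h2⟩ := hH v hv
  rw [Finset.coe_univ] at h1
  exact ⟨h1.symm, h2⟩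
end

section
/- Let D be a finite digraph with capacities x, y ∈ ℝ₊^E and suppose λ_y(u) < λ_x(u) for some u ∈ V−r. Then there exist an edge e ∈ E with head v and ε > 0 with x(e) − y(e) ≥ ε such that the polygammoid of v under capacity y + ε·χ_e equals { s + δ·χ_e : s ∈ G_y(v), 0 ≤ δ ≤ ε }. -/
attribute [local instance] Classical.propDecidable

set_option linter.unusedSectionVars false

namespace Digraph'

variable {V E : Type} [Fintype V] [Fintype E]

open Finset

/-- capacity of the cut leaving `W`. -/
noncomputable def capOut (D : Digraph' V E) (c : E → ℝ) (W : Set V) : ℝ :=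
  ∑ e, if D.tail e ∈ W ∧ D.head e ∉ W then c e else 0

lemma capOut_nonneg (D : Digraph' V E) {c : E → ℝ} (hc : ∀ e, 0 ≤ c e) (W : Set V) :
    0 ≤ D.capOut c W := by
  apply Finset.sum_nonneg
  intro e _
  by_cases h : D.tail e ∈ W ∧ D.head e ∉ W <;> simp [h, hc e]

lemma inflow_add (D : Digraph' V E) (x y : E → ℝ) (w : V) :
    D.inflow (x + y) w = D.inflow x w + D.inflow y w := by
  unfold inflow
  rw [← Finset.sum_add_distrib]
  refine Finset.sum_congr rfl fun e _ => ?_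
  by_cases h : D.head e = w <;> simp [h]

lemma outflow_add (D : Digraph' V E) (x y : E → ℝ) (w : V) :
    D.outflow (x + y) w = D.outflow x w + D.outflow y w := by
  unfold outflow
  rw [← Finset.sum_add_distrib]
  refine Finset.sum_congr rfl fun e _ => ?_
  by_cases h : D.tail e = w <;> simp [h]

lemma inflow_sub (D : Digraph' V E) (x y : E → ℝ) (w : V) :
    D.inflow (x - y) w = D.inflow x w - D.inflow y w := by
  unfold inflow
  rw [← Finset.sum_sub_distrib]
  refine Finset.sum_congr rfl fun e _ => ?_
  by_cases h : D.head e = w <;> simp [h]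

lemma outflow_sub (D : Digraph' V E) (x y : E → ℝ) (w : V) :
    D.outflow (x - y) w = D.outflow x w - D.outflow y w := by
  unfold outflow
  rw [← Finset.sum_sub_distrib]
  refine Finset.sum_congr rfl fun e _ => ?_
  by_cases h : D.tail e = w <;> simp [h]

lemma inflow_smul (D : Digraph' V E) (a : ℝ) (x : E → ℝ) (w : V) :
    D.inflow (a • x) w = a * D.inflow x w := by
  unfold inflow
  rw [Finset.mul_sum]
  refine Finset.sum_congr rfl fun e _ => ?_
  by_cases h : D.head e = w <;> simp [h]

lemma outflow_smul (D : Digraph' V E) (a : ℝ) (x : E → ℝ) (w : V) :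
    D.outflow (a • x) w = a * D.outflow x w := by
  unfold outflow
  rw [Finset.mul_sum]
  refine Finset.sum_congr rfl fun e _ => ?_
  by_cases h : D.tail e = w <;> simp [h]

lemma inflow_chi (D : Digraph' V E) (f : E) (w : V) :
    D.inflow (chi f) w = if D.head f = w then 1 else 0 := by
  unfold inflow chi
  rw [show (∑ e, if D.head e = w then (if e = f then (1:ℝ) else 0) else 0)
      = ∑ e, if e = f then (if D.head e = w then (1:ℝ) else 0) else 0 from
    Finset.sum_congr rfl fun e _ => by
      by_cases h1 : D.head e = w <;> by_cases h2 : e = f <;> simp [h1, h2]]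
  simp

lemma outflow_chi (D : Digraph' V E) (f : E) (w : V) :
    D.outflow (chi f) w = if D.tail f = w then 1 else 0 := by
  unfold outflow chi
  rw [show (∑ e, if D.tail e = w then (if e = f then (1:ℝ) else 0) else 0)
      = ∑ e, if e = f then (if D.tail e = w then (1:ℝ) else 0) else 0 from
    Finset.sum_congr rfl fun e _ => by
      by_cases h1 : D.tail e = w <;> by_cases h2 : e = f <;> simp [h1, h2]]
  simp

lemma inflow_nonneg (D : Digraph' V E) {x : E → ℝ} (hx : ∀ e, 0 ≤ x e) (w : V) :
    0 ≤ D.inflow x w := by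
  apply Finset.sum_nonneg; intro e _
  by_cases h : D.head e = w <;> simp [h, hx e]

lemma outflow_nonneg (D : Digraph' V E) {x : E → ℝ} (hx : ∀ e, 0 ≤ x e) (w : V) :
    0 ≤ D.outflow x w := by
  apply Finset.sum_nonneg; intro e _
  by_cases h : D.tail e = w <;> simp [h, hx e]

lemma eq_zero_of_outflow_zero (D : Digraph' V E) {x : E → ℝ} (hx : ∀ e, 0 ≤ x e) {w : V}
    (h : D.outflow x w = 0) : ∀ e, D.tail e = w → x e = 0 := by
  intro e he
  have := (Finset.sum_eq_zero_iff_of_nonneg (fun f _ => by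
    by_cases hf : D.tail f = w <;> simp [hf, hx f])).mp h e (Finset.mem_univ e)
  simpa [he] using this

lemma eq_zero_of_inflow_zero (D : Digraph' V E) {x : E → ℝ} (hx : ∀ e, 0 ≤ x e) {w : V}
    (h : D.inflow x w = 0) : ∀ e, D.head e = w → x e = 0 := by
  intro e he
  have := (Finset.sum_eq_zero_iff_of_nonneg (fun f _ => by
    by_cases hf : D.head f = w <;> simp [hf, hx f])).mp h e (Finset.mem_univ e)
  simpa [he] using this

lemma inflow_eq_zero_of_no_head (D : Digraph' V E) {r : V} (hr : ∀ e, D.head e ≠ r)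
    (x : E → ℝ) : D.inflow x r = 0 := by
  unfold inflow
  exact Finset.sum_eq_zero fun e _ => by simp [hr e]


lemma chi_same (f : E) : chi f f = (1:ℝ) := if_pos rfl

lemma chi_other {f f' : E} (h : f' ≠ f) : chi f f' = (0:ℝ) := if_neg h

lemma ite_flip (P Q : Prop) (h : P ↔ Q) (x y : ℝ) :
    (if P then x else y) = (if Q then x else y) := by
  by_cases hp : P
  · rw [if_pos hp, if_pos (h.mp hp)]
  · rw [if_neg hp, if_neg (fun hq => hp (h.mpr hq))]

/-- The fundamental counting identity: net outflow summed over a set of vertices. -/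
lemma sum_netout (D : Digraph' V E) (A : Set V) (x : E → ℝ) :
    ∑ w, (if w ∈ A then D.outflow x w - D.inflow x w else 0)
      = ∑ e, ((if D.tail e ∈ A then x e else 0) - (if D.head e ∈ A then x e else 0)) := by
  have step : ∀ w, (if w ∈ A then D.outflow x w - D.inflow x w else 0)
      = ∑ e, ((if D.tail e = w then (if w ∈ A then x e else 0) else 0)
            - (if D.head e = w then (if w ∈ A then x e else 0) else 0)) := by
    intro w
    by_cases h : w ∈ A
    · simp only [h, if_true, outflow, inflow, ← Finset.sum_sub_distrib]
    · simp [h]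
  rw [Finset.sum_congr rfl fun w _ => step w, Finset.sum_comm]
  refine Finset.sum_congr rfl fun e _ => ?_
  rw [Finset.sum_sub_distrib]
  congr 1
  · rw [show (∑ w, if D.tail e = w then (if w ∈ A then x e else 0) else 0)
        = ∑ w, if D.tail e = w then (if D.tail e ∈ A then x e else 0) else 0 from
      Finset.sum_congr rfl fun w _ => by by_cases h : D.tail e = w <;> simp [h]]
    simp
  · rw [show (∑ w, if D.head e = w then (if w ∈ A then x e else 0) else 0)
        = ∑ w, if D.head e = w then (if D.head e ∈ A then x e else 0) else 0 from
      Finset.sum_congr rfl fun w _ => by by_cases h : D.head e = w <;> simp [h]]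
    simp

/-- value of a flow across any separating set. -/
lemma flow_value_cut (D : Digraph' V E) {r v : V} {z : E → ℝ} (hz : D.IsFlow r v z)
    (A : Set V) (hrA : r ∈ A) (hvA : v ∉ A) :
    D.outflow z r = ∑ e, ((if D.tail e ∈ A then z e else 0) - (if D.head e ∈ A then z e else 0)) := by
  have h := D.sum_netout A z
  rw [Finset.sum_eq_single r (fun w _ hw => ?_) (fun h' => absurd (Finset.mem_univ r) h')] at h
  · rw [← h, if_pos hrA, hz.2.2.1, sub_zero]
  · by_cases hwA : w ∈ A
    · have hwv : w ≠ v := fun h' => hvA (h' ▸ hwA)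
      rw [if_pos hwA, hz.2.1 w hw hwv, sub_self]
    · rw [if_neg hwA]

lemma inflow_sink (D : Digraph' V E) {r v : V} {z : E → ℝ} (hz : D.IsFlow r v z)
    (hvr : v ≠ r) : D.inflow z v = D.outflow z r := by
  have h := D.flow_value_cut hz {w | w ≠ v} (by simpa using hvr.symm) (by simp)
  calc D.inflow z v
      = D.inflow z v - D.outflow z v := by rw [hz.2.2.2, sub_zero]
    _ = ∑ e, ((if D.head e = v then z e else 0) - (if D.tail e = v then z e else 0)) := by
        unfold inflow outflow; rw [← Finset.sum_sub_distrib]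
    _ = D.outflow z r := by
        rw [h]
        exact Finset.sum_congr rfl fun e _ => by
          by_cases h1 : D.tail e = v <;> by_cases hh : D.head e = v <;>
            simp [h1, hh, Set.mem_setOf_eq]

lemma flow_le_capOut (D : Digraph' V E) {r v : V} {z c : E → ℝ} (hz : D.IsFlow r v z)
    (hc : z ≤ c) (A : Set V) (hrA : r ∈ A) (hvA : v ∉ A) :
    D.outflow z r ≤ D.capOut c A := by
  rw [D.flow_value_cut hz A hrA hvA]
  apply Finset.sum_le_sum
  intro e _
  have h0 := hz.1 e
  have h1 := hc e
  by_cases ht : D.tail e ∈ A <;> by_cases hh : D.head e ∈ A <;>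
    simp [ht, hh, capOut] <;> linarith

lemma isFlow_zero (D : Digraph' V E) (r v : V) : D.IsFlow r v 0 := by
  refine ⟨fun e => le_refl 0, fun u _ _ => ?_, ?_, ?_⟩ <;>
    simp [inflow, outflow]

lemma isFlow_smul (D : Digraph' V E) {r v : V} {z : E → ℝ} (hz : D.IsFlow r v z)
    {a : ℝ} (ha : 0 ≤ a) : D.IsFlow r v (a • z) := by
  refine ⟨fun e => by simpa using mul_nonneg ha (hz.1 e), fun w hw1 hw2 => ?_, ?_, ?_⟩
  · rw [D.inflow_smul, D.outflow_smul, hz.2.1 w hw1 hw2]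
  · rw [D.inflow_smul, hz.2.2.1, mul_zero]
  · rw [D.outflow_smul, hz.2.2.2, mul_zero]

lemma isFlow_add (D : Digraph' V E) {r v : V} {z z' : E → ℝ} (hz : D.IsFlow r v z)
    (hz' : D.IsFlow r v z') : D.IsFlow r v (z + z') := by
  refine ⟨fun e => by simpa using add_nonneg (hz.1 e) (hz'.1 e), fun w hw1 hw2 => ?_, ?_, ?_⟩
  · rw [D.inflow_add, D.outflow_add, hz.2.1 w hw1 hw2, hz'.2.1 w hw1 hw2]
  · rw [D.inflow_add, hz.2.2.1, hz'.2.2.1, add_zero]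
  · rw [D.outflow_add, hz.2.2.2, hz'.2.2.2, add_zero]

end Digraph'
namespace Digraph'

variable {V E : Type} [Fintype V] [Fintype E]

lemma continuous_inflow (D : Digraph' V E) (w : V) :
    Continuous fun z : E → ℝ => D.inflow z w := by
  unfold inflow
  refine continuous_finset_sum _ fun e _ => ?_
  by_cases h : D.head e = w
  · simpa [h] using continuous_apply e
  · simpa [h] using (continuous_const : Continuous fun _ : E → ℝ => (0:ℝ))

lemma continuous_outflow (D : Digraph' V E) (w : V) :
    Continuous fun z : E → ℝ => D.outflow z w := by
  unfold outflow
  refine continuous_finset_sum _ fun e _ => ?_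
  by_cases h : D.tail e = w
  · simpa [h] using continuous_apply e
  · simpa [h] using (continuous_const : Continuous fun _ : E → ℝ => (0:ℝ))

lemma isClosed_flows (D : Digraph' V E) (r t : V) (c : E → ℝ) :
    IsClosed {z : E → ℝ | D.IsFlow r t z ∧ z ≤ c} := by
  have h1 : {z : E → ℝ | D.IsFlow r t z ∧ z ≤ c}
      = (⋂ e, {z : E → ℝ | 0 ≤ z e}) ∩
        ((⋂ w, {z : E → ℝ | w ≠ r → w ≠ t → D.inflow z w = D.outflow z w}) ∩
        ({z : E → ℝ | D.inflow z r = 0} ∩ ({z : E → ℝ | D.outflow z t = 0} ∩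
        (⋂ e, {z : E → ℝ | z e ≤ c e})))) := by
    ext z
    simp only [Set.mem_setOf_eq, Set.mem_inter_iff, Set.mem_iInter, IsFlow, Pi.le_def]
    tauto
  rw [h1]
  refine IsClosed.inter (isClosed_iInter fun e => isClosed_le continuous_const (continuous_apply e))
    (IsClosed.inter (isClosed_iInter fun w => ?_)
    (IsClosed.inter (isClosed_eq (D.continuous_inflow r) continuous_const)
    (IsClosed.inter (isClosed_eq (D.continuous_outflow t) continuous_const)
    (isClosed_iInter fun e => isClosed_le (continuous_apply e) continuous_const))))
  by_cases hw : w ≠ r ∧ w ≠ t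
  · have : {z : E → ℝ | w ≠ r → w ≠ t → D.inflow z w = D.outflow z w}
        = {z : E → ℝ | D.inflow z w = D.outflow z w} := by
      ext z; simp [hw.1, hw.2]
    rw [this]
    exact isClosed_eq (D.continuous_inflow w) (D.continuous_outflow w)
  · have : {z : E → ℝ | w ≠ r → w ≠ t → D.inflow z w = D.outflow z w} = Set.univ := by
      ext z
      simp only [Set.mem_setOf_eq, Set.mem_univ, iff_true]
      intro h1 h2
      exact absurd ⟨h1, h2⟩ hw
    rw [this]; exact isClosed_univ

lemma isCompact_flows (D : Digraph' V E) (r t : V) {c : E → ℝ} (hc : ∀ e, 0 ≤ c e) :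
    IsCompact {z : E → ℝ | D.IsFlow r t z ∧ z ≤ c} := by
  refine IsCompact.of_isClosed_subset (isCompact_Icc (a := (0 : E → ℝ)) (b := c))
    (D.isClosed_flows r t c) ?_
  intro z hz
  exact ⟨by intro e; exact hz.1.1 e, hz.2⟩

lemma bddAbove_flowVals (D : Digraph' V E) (r t : V) {c : E → ℝ} (hc : ∀ e, 0 ≤ c e) :
    BddAbove {a | ∃ z, D.IsFlow r t z ∧ z ≤ c ∧ D.outflow z r = a} := by
  refine ⟨∑ e, c e, ?_⟩
  rintro a ⟨z, hz, hzc, rfl⟩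
  unfold outflow
  apply Finset.sum_le_sum
  intro e _
  by_cases h : D.tail e = r
  · simpa [h] using hzc e
  · simpa [h] using hc e

lemma zero_mem_flowVals (D : Digraph' V E) (r t : V) {c : E → ℝ} (hc : ∀ e, 0 ≤ c e) :
    (0:ℝ) ∈ {a | ∃ z, D.IsFlow r t z ∧ z ≤ c ∧ D.outflow z r = a} := by
  refine ⟨0, D.isFlow_zero r t, by intro e; exact hc e, ?_⟩
  unfold outflow; simp

lemma lamF_nonneg (D : Digraph' V E) (r t : V) {c : E → ℝ} (hc : ∀ e, 0 ≤ c e) :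
    0 ≤ D.lamF r t c :=
  le_csSup (D.bddAbove_flowVals r t hc) (D.zero_mem_flowVals r t hc)

lemma le_lamF (D : Digraph' V E) {r t : V} {c z : E → ℝ} (hc : ∀ e, 0 ≤ c e)
    (hz : D.IsFlow r t z) (hzc : z ≤ c) : D.outflow z r ≤ D.lamF r t c :=
  le_csSup (D.bddAbove_flowVals r t hc) ⟨z, hz, hzc, rfl⟩

lemma lamF_le_capOut (D : Digraph' V E) {r t : V} {c : E → ℝ} (hc : ∀ e, 0 ≤ c e)
    (A : Set V) (hrA : r ∈ A) (htA : t ∉ A) : D.lamF r t c ≤ D.capOut c A := by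
  apply Real.sSup_le
  · rintro a ⟨z, hz, hzc, rfl⟩
    exact D.flow_le_capOut hz hzc A hrA htA
  · exact D.capOut_nonneg hc A

lemma exists_maxflow (D : Digraph' V E) (r t : V) {c : E → ℝ} (hc : ∀ e, 0 ≤ c e) :
    ∃ m, D.IsFlow r t m ∧ m ≤ c ∧ D.outflow m r = D.lamF r t c := by
  have him : {a | ∃ z, D.IsFlow r t z ∧ z ≤ c ∧ D.outflow z r = a}
      = (fun z => D.outflow z r) '' {z : E → ℝ | D.IsFlow r t z ∧ z ≤ c} := by
    ext a
    constructor
    · rintro ⟨z, h1, h2, h3⟩; exact ⟨z, ⟨h1, h2⟩, h3⟩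
    · rintro ⟨z, ⟨h1, h2⟩, h3⟩; exact ⟨z, h1, h2, h3⟩
  have hKc : IsCompact ((fun z => D.outflow z r) '' {z : E → ℝ | D.IsFlow r t z ∧ z ≤ c}) :=
    (D.isCompact_flows r t hc).image (D.continuous_outflow r)
  have hne : ((fun z => D.outflow z r) '' {z : E → ℝ | D.IsFlow r t z ∧ z ≤ c}).Nonempty := by
    refine ⟨0, 0, ⟨D.isFlow_zero r t, by intro e; exact hc e⟩, ?_⟩
    unfold outflow; simp
  have hmem := hKc.sSup_mem hne
  obtain ⟨m, hm, hmv⟩ := hmem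
  exact ⟨m, hm.1, hm.2, by rw [lamF, him]; exact hmv⟩

end Digraph'
namespace Digraph'

variable {V E : Type} [Fintype V] [Fintype E]

theorem maxflow_mincut (D : Digraph' V E) (r t : V) (ht : t ≠ r) (c : E → ℝ)
    (hc : ∀ e, 0 ≤ c e) (hcr : ∀ f, D.head f = r → c f = 0) :
    ∃ (W : Set V) (m : E → ℝ), r ∈ W ∧ t ∉ W ∧ D.IsFlow r t m ∧ m ≤ c ∧
      (∀ f, D.tail f ∈ W → D.head f ∉ W → m f = c f) ∧
      (∀ f, D.head f ∈ W → D.tail f ∉ W → m f = 0) ∧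
      D.outflow m r = D.capOut c W ∧
      D.outflow m r = D.lamF r t c ∧
      (∀ S : Set V, r ∈ S →
        (∀ f, D.tail f ∈ S → D.tail f ∈ W → D.head f ∉ S → m f = c f) →
        (∀ f, D.head f ∈ S → D.head f ∈ W → D.tail f ∉ S → m f = 0) → W ⊆ S) := by
  obtain ⟨m, hm, hmc, hmv⟩ := D.exists_maxflow r t hc
  set Res : V → V → Prop := fun a b =>
    ((∃ f, D.tail f = a ∧ D.head f = b ∧ m f < c f) ∨
     (∃ f, D.tail f = b ∧ D.head f = a ∧ 0 < m f)) ∧ a ≠ t with hRes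
  set W : Set V := {w | Relation.ReflTransGen Res r w} with hW
  have hrW : r ∈ W := Relation.ReflTransGen.refl
  -- no augmenting path can reach t
  have htW : t ∉ W := by
    intro hreach
    have key : ∀ w, Relation.ReflTransGen Res r w →
        ∃ (K η₀ : ℝ), 0 ≤ K ∧ 0 < η₀ ∧ ∀ η, 0 < η → η ≤ η₀ → ∃ p : E → ℝ,
          (∀ f, 0 ≤ p f) ∧ (∀ f, p f ≤ c f) ∧ (∀ f, |p f - m f| ≤ K * η) ∧
          (∀ a, D.outflow p a - D.inflow p a
              = D.outflow m a - D.inflow m a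
                + η * ((if a = r then 1 else 0) - (if a = w then 1 else 0))) ∧
          D.outflow p t = D.outflow m t ∧ D.inflow p r = D.inflow m r := by
      intro w hw
      induction hw with
      | refl =>
        refine ⟨0, 1, le_refl 0, one_pos, fun η hη _ => ⟨m, hm.1, fun f => hmc f, ?_, ?_, rfl, rfl⟩⟩
        · intro f; simp [hη.le]
        · intro a; by_cases ha : a = r <;> simp [ha]
      | @tail a b hra hstep ih =>
        obtain ⟨K, η₀, hK, hη₀, hP⟩ := ih
        obtain ⟨hres, hat⟩ := hstep
        rcases hres with ⟨f, hf1, hf2, hf3⟩ | ⟨f, hf1, hf2, hf3⟩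
        · -- forward residual edge f : a → b with m f < c f
          subst hf1; subst hf2
          refine ⟨K + 1, min η₀ ((c f - m f)/(K+1)), by linarith, ?_, ?_⟩
          · exact lt_min hη₀ (div_pos (by linarith) (by linarith))
          · intro η hη hηle
            obtain ⟨p, hp0, hpc, hpm, hpn, hpt, hpr⟩ :=
              hP η hη (le_trans hηle (min_le_left _ _))
            have hKη : (K + 1) * η ≤ c f - m f := by
              have h2 : η ≤ (c f - m f)/(K+1) := le_trans hηle (min_le_right _ _)
              calc (K+1) * η ≤ (K+1) * ((c f - m f)/(K+1)) := by
                    apply mul_le_mul_of_nonneg_left h2; linarith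
                _ = c f - m f := by field_simp
            refine ⟨p + η • chi f, ?_, ?_, ?_, ?_, ?_, ?_⟩
            · intro f'
              by_cases h : f' = f
              · subst h
                simp only [Pi.add_apply, Pi.smul_apply, chi_same, smul_eq_mul, mul_one]
                linarith [hp0 f']
              · simp only [Pi.add_apply, Pi.smul_apply, chi_other h, smul_eq_mul, mul_zero,
                  add_zero]
                exact hp0 f'
            · intro f'
              by_cases h : f' = f
              · subst h
                have h1 : p f' - m f' ≤ K * η := le_trans (le_abs_self _) (hpm f')
                simp only [Pi.add_apply, Pi.smul_apply, chi_same, smul_eq_mul, mul_one]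
                nlinarith
              · simp only [Pi.add_apply, Pi.smul_apply, chi_other h, smul_eq_mul, mul_zero,
                  add_zero]
                exact hpc f'
            · intro f'
              by_cases h : f' = f
              · subst h
                simp only [Pi.add_apply, Pi.smul_apply, chi_same, smul_eq_mul, mul_one]
                have h1 : p f' + η - m f' = (p f' - m f') + η := by ring
                rw [h1]
                calc |(p f' - m f') + η| ≤ |p f' - m f'| + |η| := abs_add_le _ _
                  _ ≤ K * η + η := by rw [abs_of_pos hη]; linarith [hpm f']
                  _ = (K+1) * η := by ring
              · simp only [Pi.add_apply, Pi.smul_apply, chi_other h, smul_eq_mul, mul_zero,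
                  add_zero]
                nlinarith [hpm f']
            · intro x
              have hx := hpn x
              rw [D.outflow_add, D.inflow_add, D.outflow_smul, D.inflow_smul,
                D.outflow_chi, D.inflow_chi,
                ite_flip (D.tail f = x) (x = D.tail f) eq_comm 1 0,
                ite_flip (D.head f = x) (x = D.head f) eq_comm 1 0]
              split_ifs at hx ⊢ <;> linarith
            · rw [D.outflow_add, D.outflow_smul, D.outflow_chi, if_neg hat, hpt]; ring
            · have hfr : D.head f ≠ r := by
                intro h
                have := hcr f h
                have := hm.1 f
                linarith
              rw [D.inflow_add, D.inflow_smul, D.inflow_chi, if_neg hfr, hpr]; ring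
        · -- backward residual edge f : b → a with m f > 0
          subst hf1; subst hf2
          refine ⟨K + 1, min η₀ (m f/(K+1)), by linarith, ?_, ?_⟩
          · exact lt_min hη₀ (div_pos hf3 (by linarith))
          · intro η hη hηle
            obtain ⟨p, hp0, hpc, hpm, hpn, hpt, hpr⟩ :=
              hP η hη (le_trans hηle (min_le_left _ _))
            have hKη : (K + 1) * η ≤ m f := by
              have h2 : η ≤ m f/(K+1) := le_trans hηle (min_le_right _ _)
              calc (K+1) * η ≤ (K+1) * (m f/(K+1)) := by
                    apply mul_le_mul_of_nonneg_left h2; linarith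
                _ = m f := by field_simp
            refine ⟨p - η • chi f, ?_, ?_, ?_, ?_, ?_, ?_⟩
            · intro f'
              by_cases h : f' = f
              · subst h
                have h1 : -(K * η) ≤ p f' - m f' := (abs_le.mp (hpm f')).1
                simp only [Pi.sub_apply, Pi.smul_apply, chi_same, smul_eq_mul, mul_one]
                nlinarith
              · simp only [Pi.sub_apply, Pi.smul_apply, chi_other h, smul_eq_mul, mul_zero,
                  sub_zero]
                exact hp0 f'
            · intro f'
              by_cases h : f' = f
              · subst h
                simp only [Pi.sub_apply, Pi.smul_apply, chi_same, smul_eq_mul, mul_one]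
                linarith [hpc f']
              · simp only [Pi.sub_apply, Pi.smul_apply, chi_other h, smul_eq_mul, mul_zero,
                  sub_zero]
                exact hpc f'
            · intro f'
              by_cases h : f' = f
              · subst h
                simp only [Pi.sub_apply, Pi.smul_apply, chi_same, smul_eq_mul, mul_one]
                have h1 : p f' - η - m f' = (p f' - m f') + (-η) := by ring
                rw [h1]
                calc |(p f' - m f') + (-η)| ≤ |p f' - m f'| + |(-η)| := abs_add_le _ _
                  _ ≤ K * η + η := by rw [abs_neg, abs_of_pos hη]; linarith [hpm f']
                  _ = (K+1) * η := by ring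
              · simp only [Pi.sub_apply, Pi.smul_apply, chi_other h, smul_eq_mul, mul_zero,
                  sub_zero]
                nlinarith [hpm f']
            · intro x
              have hx := hpn x
              rw [D.outflow_sub, D.inflow_sub, D.outflow_smul, D.inflow_smul,
                D.outflow_chi, D.inflow_chi,
                ite_flip (D.tail f = x) (x = D.tail f) eq_comm 1 0,
                ite_flip (D.head f = x) (x = D.head f) eq_comm 1 0]
              split_ifs at hx ⊢ <;> linarith
            · have hft : D.tail f ≠ t := by
                intro h
                have := D.eq_zero_of_outflow_zero hm.1 hm.2.2.2 f h
                linarith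
              rw [D.outflow_sub, D.outflow_smul, D.outflow_chi, if_neg hft, hpt]; ring
            · have hfr : D.head f ≠ r := by
                intro h
                have := D.eq_zero_of_inflow_zero hm.1 hm.2.2.1 f h
                linarith
              rw [D.inflow_sub, D.inflow_smul, D.inflow_chi, if_neg hfr, hpr]; ring
    obtain ⟨K, η₀, hK, hη₀, hP⟩ := key t hreach
    obtain ⟨p, hp0, hpc, hpm, hpn, hpt, hpr⟩ := hP η₀ hη₀ le_rfl
    have hflow : D.IsFlow r t p := by
      refine ⟨hp0, ?_, ?_, ?_⟩
      · intro w hw1 hw2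
        have hx := hpn w
        rw [if_neg hw1, if_neg hw2, hm.2.1 w hw1 hw2] at hx
        simp at hx
        linarith
      · rw [hpr, hm.2.2.1]
      · rw [hpt, hm.2.2.2]
    have hval : D.outflow p r = D.outflow m r + η₀ := by
      have hx := hpn r
      rw [if_pos rfl, if_neg (Ne.symm ht), hpr] at hx
      simp at hx
      linarith
    have hle := D.le_lamF hc hflow (fun f => hpc f)
    rw [hval, hmv] at hle
    linarith
  -- saturation of the cut
  have sat1 : ∀ f, D.tail f ∈ W → D.head f ∉ W → m f = c f := by
    intro f h1 h2
    by_contra hne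
    have hlt : m f < c f := lt_of_le_of_ne (hmc f) hne
    exact h2 (Relation.ReflTransGen.tail h1
      ⟨Or.inl ⟨f, rfl, rfl, hlt⟩, fun he => htW (he ▸ h1)⟩)
  have sat2 : ∀ f, D.head f ∈ W → D.tail f ∉ W → m f = 0 := by
    intro f h1 h2
    by_contra hne
    have hlt : 0 < m f := lt_of_le_of_ne (hm.1 f) (Ne.symm hne)
    exact h2 (Relation.ReflTransGen.tail h1
      ⟨Or.inr ⟨f, rfl, rfl, hlt⟩, fun he => htW (he ▸ h1)⟩)
  have hcap : D.outflow m r = D.capOut c W := by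
    rw [D.flow_value_cut hm W hrW htW]
    unfold capOut
    refine Finset.sum_congr rfl fun f _ => ?_
    by_cases h1 : D.tail f ∈ W <;> by_cases h2 : D.head f ∈ W
    · rw [if_pos h1, if_pos h2, if_neg (fun hcon => hcon.2 h2)]; exact sub_self _
    · rw [if_pos h1, if_neg h2, if_pos ⟨h1, h2⟩, sub_zero]; exact sat1 f h1 h2
    · rw [if_neg h1, if_pos h2, if_neg (fun hcon => h1 hcon.1), zero_sub, sat2 f h2 h1]
      exact neg_zero
    · rw [if_neg h1, if_neg h2, if_neg (fun hcon => h1 hcon.1)]; exact sub_self _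
  have hmin : ∀ S : Set V, r ∈ S →
      (∀ f, D.tail f ∈ S → D.tail f ∈ W → D.head f ∉ S → m f = c f) →
      (∀ f, D.head f ∈ S → D.head f ∈ W → D.tail f ∉ S → m f = 0) → W ⊆ S := by
    intro S hrS hS1 hS2 w hwW
    induction hwW with
    | refl => exact hrS
    | @tail a b hra hstep ih =>
      obtain ⟨hres, hat⟩ := hstep
      by_contra hbS
      rcases hres with ⟨f, hf1, hf2, hf3⟩ | ⟨f, hf1, hf2, hf3⟩
      · have := hS1 f (by rw [hf1]; exact ih) (by rw [hf1]; exact hra) (by rw [hf2]; exact hbS)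
        linarith
      · have := hS2 f (by rw [hf2]; exact ih) (by rw [hf2]; exact hra) (by rw [hf1]; exact hbS)
        linarith
  exact ⟨W, m, hrW, htW, hm, hmc, sat1, sat2, hcap, hmv, hmin⟩

end Digraph'
namespace Digraph'

variable {V E : Type} [Fintype V] [Fintype E]

/-- residual capacity of inner cut `S` for `v`-flows, avoiding `v`. -/
noncomputable def rho (D : Digraph' V E) (y : E → ℝ) (v : V) (z : E → ℝ) (S : Finset V) : ℝ :=
  ∑ f, ((if D.tail f ∈ S ∧ D.head f ∉ S ∧ D.head f ≠ v then y f - z f else 0) +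
        (if D.head f ∈ S ∧ D.tail f ∉ S ∧ D.tail f ≠ v then z f else 0))

lemma continuous_rho (D : Digraph' V E) (y : E → ℝ) (v : V) (S : Finset V) :
    Continuous fun z : E → ℝ => D.rho y v z S := by
  unfold rho
  refine continuous_finset_sum _ fun f _ => Continuous.add ?_ ?_
  · by_cases h : D.tail f ∈ S ∧ D.head f ∉ S ∧ D.head f ≠ v
    · simp only [if_pos h]; exact Continuous.sub continuous_const (continuous_apply f)
    · simpa [h] using (continuous_const : Continuous fun _ : E → ℝ => (0:ℝ))
  · by_cases h : D.head f ∈ S ∧ D.tail f ∉ S ∧ D.tail f ≠ v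
    · simpa [h] using (continuous_apply f)
    · simpa [h] using (continuous_const : Continuous fun _ : E → ℝ => (0:ℝ))

/-- Key lemma: no `v`-flow bounded by `y` can block the inside of `W`. -/
lemma rho_pos (D : Digraph' V E) {r u v t : V} {y m z : E → ℝ} {W : Set V}
    (hy : ∀ e, 0 ≤ y e)
    (hm : D.IsFlow r u m) (hmy : m ≤ y)
    (hrW : r ∈ W) (huW : u ∉ W) (hvW : v ∉ W)
    (sat1 : ∀ f, D.tail f ∈ W → D.head f ∉ W → m f = y f)
    (sat2 : ∀ f, D.head f ∈ W → D.tail f ∉ W → m f = 0)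
    (hmin : ∀ S : Set V, r ∈ S →
      (∀ f, D.tail f ∈ S → D.tail f ∈ W → D.head f ∉ S → m f = y f) →
      (∀ f, D.head f ∈ S → D.head f ∈ W → D.tail f ∉ S → m f = 0) → W ⊆ S)
    (htW : t ∈ W)
    (hz : D.IsFlow r v z) (hzy : z ≤ y)
    (S : Finset V) (hrS : r ∈ S) (htS : t ∉ S) (hvS : v ∉ S) :
    0 < D.rho y v z S := by
  by_contra hle
  push_neg at hle
  have hterm1 : ∀ f, 0 ≤ (if D.tail f ∈ S ∧ D.head f ∉ S ∧ D.head f ≠ v then y f - z f else 0) := by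
    intro f
    by_cases h : D.tail f ∈ S ∧ D.head f ∉ S ∧ D.head f ≠ v <;> simp [h]
    linarith [hzy f]
  have hterm2 : ∀ f, 0 ≤ (if D.head f ∈ S ∧ D.tail f ∉ S ∧ D.tail f ≠ v then z f else 0) := by
    intro f
    by_cases h : D.head f ∈ S ∧ D.tail f ∉ S ∧ D.tail f ≠ v <;> simp [h]
    exact hz.1 f
  have hsum0 : D.rho y v z S = 0 :=
    le_antisymm hle (Finset.sum_nonneg fun f _ => add_nonneg (hterm1 f) (hterm2 f))
  have hzero := (Finset.sum_eq_zero_iff_of_nonneg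
    (fun f _ => add_nonneg (hterm1 f) (hterm2 f))).mp hsum0
  have zsat1 : ∀ f, D.tail f ∈ S → D.head f ∉ S → D.head f ≠ v → z f = y f := by
    intro f a b c
    have h := hzero f (Finset.mem_univ f)
    rw [if_pos (show D.tail f ∈ S ∧ D.head f ∉ S ∧ D.head f ≠ v from ⟨a, b, c⟩)] at h
    have h2 := hterm2 f
    linarith [hzy f]
  have zsat2 : ∀ f, D.head f ∈ S → D.tail f ∉ S → D.tail f ≠ v → z f = 0 := by
    intro f a b c
    have h := hzero f (Finset.mem_univ f)
    rw [if_pos (show D.head f ∈ S ∧ D.tail f ∉ S ∧ D.tail f ≠ v from ⟨a, b, c⟩)] at h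
    have h2 := hterm1 f
    linarith [hz.1 f]
  -- find the crossing edge via minimality of W
  obtain ⟨Sstar, hSstar⟩ : ∃ T : Set V, T = {a | a ∈ S ∨ a ∉ W} := ⟨_, rfl⟩
  have hSmem : ∀ a, a ∈ Sstar ↔ (a ∈ S ∨ a ∉ W) := fun a => by rw [hSstar]; exact Iff.rfl
  have hnsub : ¬ (W ⊆ Sstar) := by
    intro hsub
    rcases (hSmem t).mp (hsub htW) with h | h
    · exact htS h
    · exact h htW
  have hex : (∃ f, D.tail f ∈ S ∧ D.tail f ∈ W ∧ (D.head f ∉ S ∧ D.head f ∈ W) ∧ m f ≠ y f)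
      ∨ (∃ f, D.head f ∈ S ∧ D.head f ∈ W ∧ (D.tail f ∉ S ∧ D.tail f ∈ W) ∧ m f ≠ 0) := by
    by_contra hcon
    push_neg at hcon
    obtain ⟨hc1, hc2⟩ := hcon
    refine hnsub (hmin Sstar ((hSmem r).mpr (Or.inl hrS)) ?_ ?_)
    · intro f a b cns
      rw [hSmem] at a cns
      have hhs : D.head f ∉ S ∧ D.head f ∈ W := by
        constructor
        · intro hmem; exact cns (Or.inl hmem)
        · by_contra hmem; exact cns (Or.inr hmem)
      have hts : D.tail f ∈ S := by
        rcases a with h | h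
        · exact h
        · exact absurd b h
      exact hc1 f hts b hhs
    · intro f a b cns
      rw [hSmem] at a cns
      have hts : D.tail f ∉ S ∧ D.tail f ∈ W := by
        constructor
        · intro hmem; exact cns (Or.inl hmem)
        · by_contra hmem; exact cns (Or.inr hmem)
      have hhs : D.head f ∈ S := by
        rcases a with h | h
        · exact h
        · exact absurd b h
      exact hc2 f hhs b hts
  -- the difference z - m sums to zero over C = W \ S but is strictly negative
  obtain ⟨C, hCdef⟩ : ∃ T : Set V, T = {a | a ∈ W ∧ a ∉ S} := ⟨_, rfl⟩
  have hCmem : ∀ a, a ∈ C ↔ (a ∈ W ∧ a ∉ S) := fun a => by rw [hCdef]; exact Iff.rfl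
  have hnet := D.sum_netout C (z - m)
  have hLHS : (∑ w, (if w ∈ C then D.outflow (z - m) w - D.inflow (z - m) w else 0)) = 0 := by
    refine Finset.sum_eq_zero fun w _ => ?_
    by_cases hwC : w ∈ C
    · rw [if_pos hwC]
      obtain ⟨hwW, hwS⟩ := (hCmem w).mp hwC
      have hwr : w ≠ r := fun h => hwS (h ▸ hrS)
      have hwu : w ≠ u := fun h => huW (h ▸ hwW)
      have hwv : w ≠ v := fun h => hvW (h ▸ hwW)
      rw [D.outflow_sub, D.inflow_sub, hz.2.1 w hwr hwv, hm.2.1 w hwr hwu]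
      ring
    · rw [if_neg hwC]
  have hterm : ∀ f, ((if D.tail f ∈ C then (z - m) f else 0)
      - (if D.head f ∈ C then (z - m) f else 0)) ≤ 0 := by
    intro f
    by_cases hc1 : D.tail f ∈ C
    · by_cases hc2 : D.head f ∈ C
      · rw [if_pos hc1, if_pos hc2, sub_self]
      · rw [if_pos hc1, if_neg hc2, sub_zero, Pi.sub_apply]
        obtain ⟨htW', htS'⟩ := (hCmem _).mp hc1
        by_cases hh : D.head f ∈ S
        · have hz0 : z f = 0 := zsat2 f hh htS' (fun h => hvW (h ▸ htW'))
          rw [hz0]; linarith [hm.1 f]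
        · have hhW : D.head f ∉ W := fun hmem => hc2 ((hCmem _).mpr ⟨hmem, hh⟩)
          rw [sat1 f htW' hhW]; linarith [hzy f]
    · by_cases hc2 : D.head f ∈ C
      · rw [if_neg hc1, if_pos hc2, zero_sub, neg_nonpos, Pi.sub_apply]
        obtain ⟨hhW', hhS'⟩ := (hCmem _).mp hc2
        by_cases hts : D.tail f ∈ S
        · rw [zsat1 f hts hhS' (fun h => hvW (h ▸ hhW'))]; linarith [hmy f]
        · have htW'' : D.tail f ∉ W := fun hmem => hc1 ((hCmem _).mpr ⟨hmem, hts⟩)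
          rw [sat2 f hhW' htW'']; linarith [hz.1 f]
      · rw [if_neg hc1, if_neg hc2, sub_self]
  have hstrict : ∃ f₀ ∈ (Finset.univ : Finset E),
      ((if D.tail f₀ ∈ C then (z - m) f₀ else 0) - (if D.head f₀ ∈ C then (z - m) f₀ else 0)) < 0 := by
    rcases hex with ⟨f₀, ha, hb, ⟨hc, hd⟩, he⟩ | ⟨f₀, ha, hb, ⟨hc, hd⟩, he⟩
    · refine ⟨f₀, Finset.mem_univ f₀, ?_⟩
      have h1 : D.tail f₀ ∉ C := fun hmem => ((hCmem _).mp hmem).2 ha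
      have h2 : D.head f₀ ∈ C := (hCmem _).mpr ⟨hd, hc⟩
      rw [if_neg h1, if_pos h2, zero_sub, neg_lt_zero, Pi.sub_apply,
        zsat1 f₀ ha hc (fun h => hvW (h ▸ hd))]
      have hlt : m f₀ < y f₀ := lt_of_le_of_ne (hmy f₀) he
      linarith
    · refine ⟨f₀, Finset.mem_univ f₀, ?_⟩
      have h1 : D.tail f₀ ∈ C := (hCmem _).mpr ⟨hd, hc⟩
      have h2 : D.head f₀ ∉ C := fun hmem => ((hCmem _).mp hmem).2 ha
      rw [if_pos h1, if_neg h2, sub_zero, Pi.sub_apply,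
        zsat2 f₀ ha hc (fun h => hvW (h ▸ hd))]
      have hlt : 0 < m f₀ := lt_of_le_of_ne (hm.1 f₀) (Ne.symm he)
      linarith
  have hlt2 : (∑ f, ((if D.tail f ∈ C then (z - m) f else 0)
      - (if D.head f ∈ C then (z - m) f else 0))) < ∑ _f : E, (0:ℝ) := by
    obtain ⟨f₀, hf₀, hf₀lt⟩ := hstrict
    exact Finset.sum_lt_sum (fun f _ => hterm f) ⟨f₀, hf₀, hf₀lt⟩
  rw [← hnet, hLHS] at hlt2
  simp at hlt2

lemma exists_eps (D : Digraph' V E) {r u v t : V} {y m : E → ℝ} {W : Set V}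
    (hy : ∀ e, 0 ≤ y e)
    (hm : D.IsFlow r u m) (hmy : m ≤ y)
    (hrW : r ∈ W) (huW : u ∉ W) (hvW : v ∉ W)
    (sat1 : ∀ f, D.tail f ∈ W → D.head f ∉ W → m f = y f)
    (sat2 : ∀ f, D.head f ∈ W → D.tail f ∉ W → m f = 0)
    (hmin : ∀ S : Set V, r ∈ S →
      (∀ f, D.tail f ∈ S → D.tail f ∈ W → D.head f ∉ S → m f = y f) →
      (∀ f, D.head f ∈ S → D.head f ∈ W → D.tail f ∉ S → m f = 0) → W ⊆ S)
    (htW : t ∈ W) (htr : t ≠ r) (hvr : v ≠ r) :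
    ∃ ε₀ : ℝ, 0 < ε₀ ∧ ∀ z, D.IsFlow r v z → z ≤ y →
      ∀ S : Finset V, r ∈ S → t ∉ S → v ∉ S → ε₀ ≤ D.rho y v z S := by
  set Z := {z : E → ℝ | D.IsFlow r v z ∧ z ≤ y} with hZ
  have hZc : IsCompact Z := D.isCompact_flows r v hy
  have hZne : Z.Nonempty := ⟨0, D.isFlow_zero r v, by intro e; exact hy e⟩
  set SS : Finset (Finset V) := Finset.univ.filter (fun S => r ∈ S ∧ t ∉ S ∧ v ∉ S) with hSS
  have hSne : SS.Nonempty := by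
    refine ⟨{r}, ?_⟩
    rw [hSS, Finset.mem_filter]
    refine ⟨Finset.mem_univ _, Finset.mem_singleton_self r, ?_, ?_⟩
    · rw [Finset.mem_singleton]; exact htr
    · rw [Finset.mem_singleton]; exact hvr
  have hKc : ∀ S : Finset V, IsCompact ((fun z => D.rho y v z S) '' Z) :=
    fun S => hZc.image (D.continuous_rho y v S)
  have hKne : ∀ S : Finset V, ((fun z => D.rho y v z S) '' Z).Nonempty :=
    fun S => hZne.image _
  have hlb : ∀ S : Finset V, ∀ z ∈ Z, sInf ((fun z => D.rho y v z S) '' Z) ≤ D.rho y v z S :=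
    fun S z hz => csInf_le (hKc S).bddBelow ⟨z, hz, rfl⟩
  have hpos : ∀ S ∈ SS, 0 < sInf ((fun z => D.rho y v z S) '' Z) := by
    intro S hS
    rw [hSS, Finset.mem_filter] at hS
    obtain ⟨-, h1, h2, h3⟩ := hS
    obtain ⟨z₀, hz₀, heq⟩ := (hKc S).sInf_mem (hKne S)
    rw [← heq]
    exact D.rho_pos hy hm hmy hrW huW hvW sat1 sat2 hmin htW hz₀.1 hz₀.2 S h1 h2 h3
  refine ⟨SS.inf' hSne (fun S => sInf ((fun z => D.rho y v z S) '' Z)), ?_, ?_⟩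
  · rw [Finset.lt_inf'_iff]
    exact hpos
  · intro z hz1 hz2 S h1 h2 h3
    have hmemS : S ∈ SS := by
      rw [hSS, Finset.mem_filter]
      exact ⟨Finset.mem_univ _, h1, h2, h3⟩
    exact le_trans (Finset.inf'_le _ hmemS) (hlb S z ⟨hz1, hz2⟩)

end Digraph'
-- (continued)
namespace Digraph'

variable {V E : Type} [Fintype V] [Fintype E]

lemma outflow_eq_zero_all (D : Digraph' V E) {g : E → ℝ} {v : V}
    (h : ∀ f, D.tail f = v → g f = 0) : D.outflow g v = 0 := by
  unfold outflow
  exact Finset.sum_eq_zero fun f _ => by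
    by_cases hf : D.tail f = v
    · rw [if_pos hf]; exact h f hf
    · rw [if_neg hf]

lemma reduce_flow (D : Digraph' V E) {r : V} (hsr : ∀ f, D.head f ≠ r)
    {y : E → ℝ} (hy : ∀ e, 0 ≤ y e) (e : E) {ε : ℝ} (hε : 0 ≤ ε)
    {z : E → ℝ} (hz : D.IsFlow r (D.head e) z) (hzc : z ≤ y + ε • chi e) :
    ∃ s ∈ D.polygammoid r (D.head e) y, ∃ δ : ℝ, 0 ≤ δ ∧ δ ≤ ε ∧
      D.restrictIn (D.head e) z = s + δ • chi e := by
  set v := D.head e with hv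
  have hvr : v ≠ r := hsr e
  set δ := max (z e - y e) 0 with hδ
  have hδ0 : 0 ≤ δ := le_max_right _ _
  have hδε : δ ≤ ε := by
    have h := hzc e
    rw [Pi.add_apply, Pi.smul_apply, chi_same, smul_eq_mul, mul_one] at h
    exact max_le (by linarith) hε
  have hδze : δ ≤ z e := max_le (by linarith [hy e]) (hz.1 e)
  have hzey : z e - δ ≤ y e := by
    rcases max_cases (z e - y e) 0 with ⟨h1, h2⟩ | ⟨h1, h2⟩ <;> rw [← hδ] at h1 <;> linarith
  have hzy' : ∀ f, f ≠ e → z f ≤ y f := by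
    intro f hf
    have h := hzc f
    rw [Pi.add_apply, Pi.smul_apply, chi_other hf, smul_eq_mul, mul_zero, add_zero] at h
    exact h
  have hmain : ∃ g : E → ℝ,
      (∀ f, 0 ≤ g f) ∧ (∀ f, D.head f = v ∨ D.tail f = v → g f = 0) ∧
      (∀ f, g f ≤ z f) ∧
      (∀ w, w ≠ r → w ≠ v → D.inflow g w - D.outflow g w
          = (if D.tail e = w then δ else 0)) := by
    by_cases hδz : δ = 0
    · refine ⟨0, fun f => le_rfl, fun f _ => rfl, fun f => hz.1 f, fun w _ _ => ?_⟩
      have h1 : D.inflow (0 : E → ℝ) w = 0 := by unfold inflow; simp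
      have h2 : D.outflow (0 : E → ℝ) w = 0 := by unfold outflow; simp
      rw [h1, h2, hδz]
      simp
    by_cases hte : D.tail e = r
    · -- impossible to reach this sub-branch usefully; give the direct witness for w ≠ r
      refine ⟨0, fun f => le_rfl, fun f _ => rfl, fun f => hz.1 f, fun w hw1 _ => ?_⟩
      have h1 : D.inflow (0 : E → ℝ) w = 0 := by unfold inflow; simp
      have h2 : D.outflow (0 : E → ℝ) w = 0 := by unfold outflow; simp
      rw [h1, h2, if_neg (fun h => hw1 (by rw [← h, hte]))]
      ring
    · obtain ⟨c'', hc''eq⟩ : ∃ c : E → ℝ,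
          c = fun f => if D.head f = v ∨ D.tail f = v then 0 else z f := ⟨_, rfl⟩
      have hc''ap : ∀ f, c'' f = if D.head f = v ∨ D.tail f = v then 0 else z f := by
        intro f; rw [hc''eq]
      have hc''0 : ∀ f, 0 ≤ c'' f := by
        intro f; rw [hc''ap f]
        by_cases h : D.head f = v ∨ D.tail f = v <;> simp [h, hz.1 f]
      have hc''le : ∀ f, c'' f ≤ z f := by
        intro f; rw [hc''ap f]
        by_cases h : D.head f = v ∨ D.tail f = v <;> simp [h, hz.1 f]
      have hc''r : ∀ f, D.head f = r → c'' f = 0 := fun f h => absurd h (hsr f)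
      obtain ⟨W₀, g₀, hrW₀, htW₀, hg₀, hg₀c, _, _, hcap₀, _, _⟩ :=
        D.maxflow_mincut r (D.tail e) hte c'' hc''0 hc''r
      obtain ⟨S, hSdef⟩ : ∃ T : Set V, T = {a | a ∈ W₀ ∧ a ≠ v} := ⟨_, rfl⟩
      have hSmem : ∀ a, a ∈ S ↔ (a ∈ W₀ ∧ a ≠ v) := fun a => by rw [hSdef]; exact Iff.rfl
      have hrS : r ∈ S := (hSmem r).mpr ⟨hrW₀, Ne.symm hvr⟩
      have hvS : v ∉ S := fun h => ((hSmem v).mp h).2 rfl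
      have hval := D.flow_value_cut hz S hrS hvS
      have hμ : D.inflow z v = D.outflow z r := D.inflow_sink hz hvr
      have key1 : ∀ f, ((if D.tail f ∈ S then z f else 0) - (if D.head f ∈ S then z f else 0))
          - (if D.tail f ∈ S ∧ D.head f = v then z f else 0)
          ≤ (if D.tail f ∈ W₀ ∧ D.head f ∉ W₀ then c'' f else 0) := by
        intro f
        have hz0 := hz.1 f
        rw [hc''ap f]
        by_cases h1 : D.head f = v <;> by_cases h2 : D.tail f = v <;>
          by_cases h3 : D.tail f ∈ W₀ <;> by_cases h4 : D.head f ∈ W₀ <;>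
          simp [hSmem, h1, h2, h3, h4] <;> linarith
      have key2 : D.outflow z r - (∑ f, if D.tail f ∈ S ∧ D.head f = v then z f else 0)
          ≤ D.capOut c'' W₀ := by
        rw [hval]
        unfold capOut
        rw [← Finset.sum_sub_distrib]
        exact Finset.sum_le_sum fun f _ => key1 f
      have key3 : z e ≤ D.outflow z r - (∑ f, if D.tail f ∈ S ∧ D.head f = v then z f else 0) := by
        have heS : D.tail e ∉ S := fun h => htW₀ ((hSmem _).mp h).1
        have hterm : ∀ f, (if f = e then z e else 0)
            ≤ (if D.head f = v then z f else 0)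
              - (if D.tail f ∈ S ∧ D.head f = v then z f else 0) := by
          intro f
          by_cases hf : f = e
          · subst hf
            rw [if_pos rfl, if_pos hv.symm, if_neg (fun h => heS h.1)]
            simp
          · rw [if_neg hf]
            by_cases h1 : D.head f = v
            · by_cases h2 : D.tail f ∈ S
              · rw [if_pos h1, if_pos ⟨h2, h1⟩]; simp
              · rw [if_pos h1, if_neg (fun h => h2 h.1)]; linarith [hz.1 f]
            · rw [if_neg h1, if_neg (fun h => h1 h.2)]; simp
        have hsum := Finset.sum_le_sum (fun f (_ : f ∈ Finset.univ) => hterm f)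
        rw [Finset.sum_sub_distrib] at hsum
        have hse : (∑ f, if f = e then z e else 0) = z e := by
          rw [Finset.sum_ite_eq' Finset.univ e (fun _ => z e)]
          simp
        have hin : (∑ f, if D.head f = v then z f else 0) = D.outflow z r := hμ
        rw [hse, hin] at hsum
        exact hsum
      have hδcap : δ ≤ D.outflow g₀ r := by
        rw [hcap₀]
        linarith
      have hg₀0 : 0 ≤ D.outflow g₀ r := D.outflow_nonneg hg₀.1 r
      have hg₀pos : 0 < D.outflow g₀ r := by
        rcases lt_or_eq_of_le hg₀0 with h | h
        · exact h
        · exfalso; apply hδz; linarith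
      set θ := δ / D.outflow g₀ r with hθ
      have hθ0 : 0 ≤ θ := div_nonneg hδ0 hg₀0
      have hθ1 : θ ≤ 1 := by
        rw [hθ, div_le_one hg₀pos]; exact hδcap
      have hgflow : D.IsFlow r (D.tail e) (θ • g₀) := D.isFlow_smul hg₀ hθ0
      have hgv0 : ∀ f, D.head f = v ∨ D.tail f = v → (θ • g₀) f = 0 := by
        intro f hf
        have h1 : c'' f = 0 := by rw [hc''ap f, if_pos hf]
        have h2 : g₀ f = 0 := le_antisymm (by rw [← h1]; exact hg₀c f) (hg₀.1 f)
        simp [h2]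
      have hgval : D.outflow (θ • g₀) r = δ := by
        rw [D.outflow_smul, hθ, div_mul_cancel₀]
        exact ne_of_gt hg₀pos
      refine ⟨θ • g₀, fun f => by simpa using mul_nonneg hθ0 (hg₀.1 f), hgv0, ?_, ?_⟩
      · intro f
        calc (θ • g₀) f = θ * g₀ f := rfl
          _ ≤ 1 * g₀ f := mul_le_mul_of_nonneg_right hθ1 (hg₀.1 f)
          _ = g₀ f := one_mul _
          _ ≤ c'' f := hg₀c f
          _ ≤ z f := hc''le f
      · intro w hw1 hw2
        by_cases hwt : D.tail e = w
        · rw [if_pos hwt, ← hwt]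
          rw [D.inflow_sink hgflow hte, hgval, hgflow.2.2.2, sub_zero]
        · rw [if_neg hwt, hgflow.2.1 w hw1 (fun h => hwt h.symm), sub_self]
  -- now handle the case tail e = r directly, else use g
  by_cases hte : D.tail e = r
  · -- direct removal along the edge e itself
    refine ⟨D.restrictIn v (z - δ • chi e), ⟨z - δ • chi e, ?_, ?_, rfl⟩, δ, hδ0, hδε, ?_⟩
    · refine ⟨?_, ?_, D.inflow_eq_zero_of_no_head hsr _, ?_⟩
      · intro f
        by_cases hf : f = e
        · subst hf
          simp only [Pi.sub_apply, Pi.smul_apply, chi_same, smul_eq_mul, mul_one]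
          linarith
        · simp only [Pi.sub_apply, Pi.smul_apply, chi_other hf, smul_eq_mul, mul_zero, sub_zero]
          exact hz.1 f
      · intro w hw1 hw2
        rw [D.inflow_sub, D.outflow_sub, D.inflow_smul, D.outflow_smul,
          D.inflow_chi, D.outflow_chi, if_neg (fun h : D.head e = w => hw2 (by rw [← h, hv])),
          if_neg (fun h : D.tail e = w => hw1 (by rw [← h, hte])), hz.2.1 w hw1 hw2]
      · rw [D.outflow_sub, D.outflow_smul, D.outflow_chi,
          if_neg (fun h : D.tail e = v => hvr (by rw [← h, hte])), hz.2.2.2]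
        ring
    · intro f
      by_cases hf : f = e
      · subst hf
        simp only [Pi.sub_apply, Pi.smul_apply, chi_same, smul_eq_mul, mul_one]
        exact hzey
      · simp only [Pi.sub_apply, Pi.smul_apply, chi_other hf, smul_eq_mul, mul_zero, sub_zero]
        exact hzy' f hf
    · funext f
      simp only [restrictIn, Pi.add_apply, Pi.sub_apply, Pi.smul_apply, smul_eq_mul]
      by_cases hhf : D.head f = v
      · rw [if_pos hhf, if_pos hhf]; ring
      · rw [if_neg hhf, if_neg hhf]
        have hfe : f ≠ e := fun h => hhf (by rw [h, ← hv])
        rw [chi_other hfe]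
        ring
  · obtain ⟨g, hg0, hgv0, hgz, hgcons⟩ := hmain
    refine ⟨D.restrictIn v (z - g - δ • chi e), ⟨z - g - δ • chi e, ?_, ?_, rfl⟩, δ, hδ0, hδε, ?_⟩
    · refine ⟨?_, ?_, D.inflow_eq_zero_of_no_head hsr _, ?_⟩
      · intro f
        by_cases hf : f = e
        · subst hf
          have hge : g f = 0 := hgv0 f (Or.inl hv.symm)
          simp only [Pi.sub_apply, Pi.smul_apply, chi_same, smul_eq_mul, mul_one, hge]
          linarith
        · simp only [Pi.sub_apply, Pi.smul_apply, chi_other hf, smul_eq_mul, mul_zero, sub_zero]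
          linarith [hgz f, hg0 f]
      · intro w hw1 hw2
        rw [D.inflow_sub, D.inflow_sub, D.outflow_sub, D.outflow_sub,
          D.inflow_smul, D.outflow_smul, D.inflow_chi, D.outflow_chi,
          if_neg (fun h : D.head e = w => hw2 (by rw [← h, hv])),
          hz.2.1 w hw1 hw2]
        have := hgcons w hw1 hw2
        by_cases hwt : D.tail e = w
        · rw [if_pos hwt] at this ⊢
          linarith
        · rw [if_neg hwt] at this ⊢
          linarith
      · rw [D.outflow_sub, D.outflow_sub, D.outflow_smul, D.outflow_chi, hz.2.2.2]
        have hgv : D.outflow g v = 0 :=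
          D.outflow_eq_zero_all (fun f hf => hgv0 f (Or.inr hf))
        rw [hgv]
        by_cases htv : D.tail e = v
        · have hze0 : z e = 0 := D.eq_zero_of_outflow_zero hz.1 hz.2.2.2 e htv
          have : δ = 0 := le_antisymm (by linarith) hδ0
          rw [if_pos htv, this]
          ring
        · rw [if_neg htv]
          ring
    · intro f
      by_cases hf : f = e
      · subst hf
        have hge : g f = 0 := hgv0 f (Or.inl hv.symm)
        simp only [Pi.sub_apply, Pi.smul_apply, chi_same, smul_eq_mul, mul_one, hge]
        linarith
      · simp only [Pi.sub_apply, Pi.smul_apply, chi_other hf, smul_eq_mul, mul_zero, sub_zero]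
        linarith [hzy' f hf, hg0 f]
    · funext f
      simp only [restrictIn, Pi.add_apply, Pi.sub_apply, Pi.smul_apply, smul_eq_mul]
      by_cases hhf : D.head f = v
      · rw [if_pos hhf, if_pos hhf]
        have hge : g f = 0 := hgv0 f (Or.inl hhf)
        rw [hge]
        ring
      · rw [if_neg hhf, if_neg hhf]
        have hfe : f ≠ e := fun h => hhf (by rw [h, ← hv])
        rw [chi_other hfe]
        ring

end Digraph'
namespace Digraph'

variable {V E : Type} [Fintype V] [Fintype E]

lemma chi_nonneg (e f : E) : (0:ℝ) ≤ chi e f := by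
  unfold chi; by_cases h : f = e <;> simp [h]

lemma restrictIn_add (D : Digraph' V E) (v : V) (x y : E → ℝ) :
    D.restrictIn v (x + y) = D.restrictIn v x + D.restrictIn v y := by
  funext f
  simp only [restrictIn, Pi.add_apply]
  by_cases h : D.head f = v <;> simp [h]

lemma restrictIn_smul (D : Digraph' V E) (v : V) (a : ℝ) (x : E → ℝ) :
    D.restrictIn v (a • x) = a • D.restrictIn v x := by
  funext f
  simp only [restrictIn, Pi.smul_apply, smul_eq_mul]
  by_cases h : D.head f = v <;> simp [h]

lemma augment_flow (D : Digraph' V E) {r : V} (hsr : ∀ f, D.head f ≠ r)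
    {y : E → ℝ} (hy : ∀ e, 0 ≤ y e) (e : E) {ε : ℝ} (hεpos : 0 < ε)
    (hne : D.tail e ≠ D.head e)
    (hbound : D.tail e ≠ r → ∀ z', D.IsFlow r (D.head e) z' → z' ≤ y →
      ∀ S : Finset V, r ∈ S → D.tail e ∉ S → D.head e ∉ S → ε ≤ D.rho y (D.head e) z' S)
    {z : E → ℝ} (hz : D.IsFlow r (D.head e) z) (hzy : z ≤ y)
    {δ : ℝ} (hδ0 : 0 ≤ δ) (hδε : δ ≤ ε) :
    D.restrictIn (D.head e) z + δ • chi e ∈ D.polygammoid r (D.head e) (y + ε • chi e) := by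
  set v := D.head e with hv
  have hvr : v ≠ r := hsr e
  have hfull : ∃ z2, D.IsFlow r v z2 ∧ z2 ≤ y + ε • chi e ∧
      D.restrictIn v z2 = D.restrictIn v z + ε • chi e := by
    by_cases hte : D.tail e = r
    · -- push directly along e from the root
      refine ⟨z + ε • chi e, ⟨?_, ?_, D.inflow_eq_zero_of_no_head hsr _, ?_⟩, ?_, ?_⟩
      · intro f
        have := hz.1 f
        have := chi_nonneg e f
        simp only [Pi.add_apply, Pi.smul_apply, smul_eq_mul]
        nlinarith
      · intro w hw1 hw2
        rw [D.inflow_add, D.outflow_add, D.inflow_smul, D.outflow_smul,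
          D.inflow_chi, D.outflow_chi, if_neg (fun h : D.head e = w => hw2 (by rw [← h, hv])),
          if_neg (fun h : D.tail e = w => hw1 (by rw [← h, hte])), hz.2.1 w hw1 hw2]
      · rw [D.outflow_add, D.outflow_smul, D.outflow_chi,
          if_neg (fun h : D.tail e = v => hvr (by rw [← h, hte])), hz.2.2.2]
        ring
      · intro f
        simp only [Pi.add_apply, Pi.smul_apply, smul_eq_mul]
        have := hzy f
        linarith
      · rw [D.restrictIn_add, D.restrictIn_smul]
        congr 1
        funext f
        simp only [restrictIn, Pi.smul_apply, smul_eq_mul]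
        by_cases hhf : D.head f = v
        · rw [if_pos hhf]
        · rw [if_neg hhf, chi_other (fun h : f = e => hhf (by rw [h, ← hv])), mul_zero]
    · -- residual network on E ⊕ E
      set t := D.tail e with htt
      set D' : Digraph' V (E ⊕ E) :=
        ⟨Sum.elim D.tail D.head, Sum.elim D.head D.tail⟩ with hD'
      have hD'tl : ∀ f, D'.tail (Sum.inl f) = D.tail f := fun f => rfl
      have hD'tr : ∀ f, D'.tail (Sum.inr f) = D.head f := fun f => rfl
      have hD'hl : ∀ f, D'.head (Sum.inl f) = D.head f := fun f => rfl
      have hD'hr : ∀ f, D'.head (Sum.inr f) = D.tail f := fun f => rfl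
      obtain ⟨c', hc'⟩ : ∃ c : E ⊕ E → ℝ, c = Sum.elim
          (fun f => if D.head f = v ∨ D.tail f = v then 0 else y f - z f)
          (fun f => if D.head f = v ∨ D.tail f = v ∨ D.tail f = r then 0 else z f) := ⟨_, rfl⟩
      have hc'l : ∀ f, c' (Sum.inl f)
          = if D.head f = v ∨ D.tail f = v then 0 else y f - z f := fun f => by rw [hc']; rfl
      have hc'r : ∀ f, c' (Sum.inr f)
          = if D.head f = v ∨ D.tail f = v ∨ D.tail f = r then 0 else z f := fun f => by rw [hc']; rfl
      have hc'0 : ∀ f', 0 ≤ c' f' := by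
        intro f'
        rcases f' with f | f
        · rw [hc'l f]
          by_cases h : D.head f = v ∨ D.tail f = v <;> simp [h]
          linarith [hzy f]
        · rw [hc'r f]
          by_cases h : D.head f = v ∨ D.tail f = v ∨ D.tail f = r <;> simp [h, hz.1 f]
      have hc'root : ∀ f', D'.head f' = r → c' f' = 0 := by
        intro f' h
        rcases f' with f | f
        · exact absurd (by rw [← hD'hl f]; exact h) (hsr f)
        · rw [hc'r f, if_pos (Or.inr (Or.inr (by rw [← hD'hr f]; exact h)))]
      obtain ⟨W₁, g, hrW₁, htW₁, hgfl, hgc, _, _, hcapg, _, _⟩ :=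
        D'.maxflow_mincut r t hte c' hc'0 hc'root
      -- identify the cut capacity with rho
      set SF : Finset V := Finset.univ.filter (fun a => a ∈ W₁ ∧ a ≠ v) with hSF
      have hSFmem : ∀ a, a ∈ SF ↔ (a ∈ W₁ ∧ a ≠ v) := by
        intro a; rw [hSF, Finset.mem_filter]; simp
      have hcaprho : D'.capOut c' W₁ = D.rho y v z SF := by
        unfold capOut rho
        rw [Fintype.sum_sum_type, Finset.sum_add_distrib]
        congr 1
        · refine Finset.sum_congr rfl fun f _ => ?_
          rw [hD'tl f, hD'hl f, hc'l f]
          by_cases h1 : D.head f = v <;> by_cases h2 : D.tail f = v <;>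
            by_cases h3 : D.tail f ∈ W₁ <;> by_cases h4 : D.head f ∈ W₁ <;>
            simp [hSFmem, h1, h2, h3, h4]
        · refine Finset.sum_congr rfl fun f _ => ?_
          rw [hD'tr f, hD'hr f, hc'r f]
          by_cases h5 : D.tail f = r
          · have h3 : D.tail f ∈ W₁ := by rw [h5]; exact hrW₁
            have h6 : D.tail f ∈ SF := (hSFmem _).mpr ⟨h3, by rw [h5]; exact Ne.symm hvr⟩
            simp [h3, h6]
          · by_cases h1 : D.head f = v <;> by_cases h2 : D.tail f = v <;>
              by_cases h3 : D.tail f ∈ W₁ <;> by_cases h4 : D.head f ∈ W₁ <;>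
              simp [hSFmem, h1, h2, h3, h4, h5]
      -- the cut capacity is at least ε
      have hval : ε ≤ D'.outflow g r := by
        rw [hcapg, hcaprho]
        refine hbound hte z hz hzy SF ?_ ?_ ?_
        · exact (hSFmem r).mpr ⟨hrW₁, Ne.symm hvr⟩
        · intro h; exact htW₁ ((hSFmem t).mp h).1
        · intro h; exact ((hSFmem v).mp h).2 rfl
      have hgr0 : 0 < D'.outflow g r := lt_of_lt_of_le hεpos hval
      set θ := ε / D'.outflow g r with hθ
      have hθ0 : 0 ≤ θ := div_nonneg hεpos.le hgr0.le
      have hθ1 : θ ≤ 1 := by rw [hθ, div_le_one hgr0]; exact hval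
      set g' := θ • g with hg'
      have hg'fl : D'.IsFlow r t g' := D'.isFlow_smul hgfl hθ0
      have hg'0 : ∀ f', 0 ≤ g' f' := hg'fl.1
      have hg'c : ∀ f', g' f' ≤ c' f' := by
        intro f'
        calc g' f' = θ * g f' := rfl
          _ ≤ 1 * g f' := mul_le_mul_of_nonneg_right hθ1 (hgfl.1 f')
          _ = g f' := one_mul _
          _ ≤ c' f' := hgc f'
      have hg'val : D'.outflow g' r = ε := by
        rw [hg', D'.outflow_smul, hθ, div_mul_cancel₀]
        exact ne_of_gt hgr0
      have hg'l0 : ∀ f, D.head f = v ∨ D.tail f = v → g' (Sum.inl f) = 0 := by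
        intro f hf
        refine le_antisymm ?_ (hg'0 _)
        calc g' (Sum.inl f) ≤ c' (Sum.inl f) := hg'c _
          _ = 0 := by rw [hc'l f, if_pos hf]
      have hg'r0 : ∀ f, D.head f = v ∨ D.tail f = v ∨ D.tail f = r → g' (Sum.inr f) = 0 := by
        intro f hf
        refine le_antisymm ?_ (hg'0 _)
        calc g' (Sum.inr f) ≤ c' (Sum.inr f) := hg'c _
          _ = 0 := by rw [hc'r f, if_pos hf]
      -- the augmented flow
      set A : E → ℝ := fun f => g' (Sum.inl f) with hA
      set B : E → ℝ := fun f => g' (Sum.inr f) with hB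
      set z2 : E → ℝ := z + A - B + ε • chi e with hz2
      have hz2ap : ∀ f, z2 f = z f + g' (Sum.inl f) - g' (Sum.inr f) + ε * chi e f := by
        intro f; rw [hz2]; rfl
      have hlink : ∀ w, (D.inflow A w - D.outflow A w) - (D.inflow B w - D.outflow B w)
          = D'.inflow g' w - D'.outflow g' w := by
        intro w
        unfold inflow outflow
        rw [Fintype.sum_sum_type, Fintype.sum_sum_type]
        have e1 : ∀ f : E, (if D'.head (Sum.inl f) = w then g' (Sum.inl f) else 0)
            = (if D.head f = w then A f else 0) := fun f => by rw [hD'hl, hA]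
        have e2 : ∀ f : E, (if D'.head (Sum.inr f) = w then g' (Sum.inr f) else 0)
            = (if D.tail f = w then B f else 0) := fun f => by rw [hD'hr, hB]
        have e3 : ∀ f : E, (if D'.tail (Sum.inl f) = w then g' (Sum.inl f) else 0)
            = (if D.tail f = w then A f else 0) := fun f => by rw [hD'tl, hA]
        have e4 : ∀ f : E, (if D'.tail (Sum.inr f) = w then g' (Sum.inr f) else 0)
            = (if D.head f = w then B f else 0) := fun f => by rw [hD'tr, hB]
        rw [Finset.sum_congr rfl fun f _ => e1 f, Finset.sum_congr rfl fun f _ => e2 f,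
          Finset.sum_congr rfl fun f _ => e3 f, Finset.sum_congr rfl fun f _ => e4 f]
        ring
      refine ⟨z2, ⟨?_, ?_, D.inflow_eq_zero_of_no_head hsr _, ?_⟩, ?_, ?_⟩
      · intro f
        rw [hz2ap f]
        by_cases hf1 : D.head f = v ∨ D.tail f = v
        · rw [hg'l0 f hf1, hg'r0 f (by tauto)]
          have := chi_nonneg e f
          have := hz.1 f
          nlinarith
        · have hfe : f ≠ e := fun h => hf1 (Or.inl (by rw [h, ← hv]))
          rw [chi_other hfe, mul_zero]
          have h1 : g' (Sum.inr f) ≤ z f := by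
            calc g' (Sum.inr f) ≤ c' (Sum.inr f) := hg'c _
              _ ≤ z f := by rw [hc'r f]; by_cases h : D.head f = v ∨ D.tail f = v ∨ D.tail f = r <;>
                  simp [h, hz.1 f]
          have := hg'0 (Sum.inl f)
          linarith
      · intro w hw1 hw2
        have hx := hlink w
        have hin2 : D.inflow z2 w = D.inflow z w + D.inflow A w - D.inflow B w
            + ε * (if D.head e = w then 1 else 0) := by
          rw [hz2, D.inflow_add, D.inflow_sub, D.inflow_add, D.inflow_smul, D.inflow_chi]
        have hout2 : D.outflow z2 w = D.outflow z w + D.outflow A w - D.outflow B w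
            + ε * (if D.tail e = w then 1 else 0) := by
          rw [hz2, D.outflow_add, D.outflow_sub, D.outflow_add, D.outflow_smul, D.outflow_chi]
        rw [hin2, hout2, if_neg (fun h : D.head e = w => hw2 (by rw [← h, hv])),
          hz.2.1 w hw1 hw2]
        by_cases hwt : D.tail e = w
        · have hw_t : w = t := by rw [htt, hwt]
          have hgin : D'.inflow g' w = ε := by
            rw [hw_t, D'.inflow_sink hg'fl hte, hg'val]
          have hgout : D'.outflow g' w = 0 := by rw [hw_t]; exact hg'fl.2.2.2
          rw [if_pos hwt]
          rw [hgin, hgout] at hx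
          linarith
        · have hwt' : w ≠ t := fun h => hwt (by rw [htt] at h; exact h.symm)
          have := hg'fl.2.1 w hw1 hwt'
          rw [if_neg hwt]
          rw [this] at hx
          linarith
      · refine D.outflow_eq_zero_all fun f hf => ?_
        rw [hz2ap f]
        have h1 : z f = 0 := D.eq_zero_of_outflow_zero hz.1 hz.2.2.2 f hf
        have h2 : g' (Sum.inl f) = 0 := hg'l0 f (Or.inr hf)
        have h3 : g' (Sum.inr f) = 0 := hg'r0 f (Or.inr (Or.inl hf))
        have hfe : f ≠ e := fun h => hne (by rw [h] at hf; exact hf)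
        rw [h1, h2, h3, chi_other hfe]
        ring
      · intro f
        rw [hz2ap f]
        simp only [Pi.add_apply, Pi.smul_apply, smul_eq_mul]
        by_cases hf1 : D.head f = v ∨ D.tail f = v
        · rw [hg'l0 f hf1, hg'r0 f (by tauto)]
          have := hzy f
          have := chi_nonneg e f
          have := hg'0 (Sum.inr f)
          linarith
        · have hfe : f ≠ e := fun h => hf1 (Or.inl (by rw [h, ← hv]))
          rw [chi_other hfe]
          have h1 : g' (Sum.inl f) ≤ y f - z f := by
            calc g' (Sum.inl f) ≤ c' (Sum.inl f) := hg'c _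
              _ ≤ y f - z f := by rw [hc'l f]; by_cases h : D.head f = v ∨ D.tail f = v <;>
                  simp [h] <;> linarith [hzy f]
          have := hg'0 (Sum.inr f)
          linarith
      · funext f
        simp only [restrictIn, Pi.add_apply, Pi.smul_apply, smul_eq_mul]
        rw [hz2ap f]
        by_cases hhf : D.head f = v
        · rw [if_pos hhf, if_pos hhf, hg'l0 f (Or.inl hhf), hg'r0 f (Or.inl hhf)]
          ring
        · rw [if_neg hhf, if_neg hhf, chi_other (fun h : f = e => hhf (by rw [h, ← hv])),
            mul_zero]
          ring
  -- convex combination to reach δ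
  obtain ⟨z2, h1, h2, h3⟩ := hfull
  set θ := δ / ε with hθ
  have hθ0 : 0 ≤ θ := div_nonneg hδ0 hεpos.le
  have hθ1 : θ ≤ 1 := by rw [hθ, div_le_one hεpos]; exact hδε
  have hθε : θ * ε = δ := div_mul_cancel₀ δ (ne_of_gt hεpos)
  refine ⟨(1 - θ) • z + θ • z2,
    D.isFlow_add (D.isFlow_smul hz (by linarith)) (D.isFlow_smul h1 hθ0), ?_, ?_⟩
  · intro f
    have hzf : z f ≤ (y + ε • chi e) f := by
      simp only [Pi.add_apply, Pi.smul_apply, smul_eq_mul]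
      have := hzy f
      have := chi_nonneg e f
      nlinarith
    calc ((1 - θ) • z + θ • z2) f = (1 - θ) * z f + θ * z2 f := rfl
      _ ≤ (1 - θ) * ((y + ε • chi e) f) + θ * ((y + ε • chi e) f) :=
          add_le_add (mul_le_mul_of_nonneg_left hzf (by linarith))
            (mul_le_mul_of_nonneg_left (h2 f) hθ0)
      _ = (y + ε • chi e) f := by ring
  · rw [D.restrictIn_add, D.restrictIn_smul, D.restrictIn_smul, h3]
    funext f
    simp only [Pi.add_apply, Pi.smul_apply, smul_eq_mul]
    linear_combination (chi e f) * hθε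

end Digraph'

open Digraph' in
/-- Fractional key lemma: if `λ_y(u) < λ_x(u)` then some edge `e` and `ε > 0`
with `x(e) - y(e) ≥ ε` satisfy
`G_{y+ε·χ_e}(v) = { s + δ·χ_e : s ∈ G_y(v), 0 ≤ δ ≤ ε }` where `v` is the head of `e`. -/
theorem stmt5 {V E : Type} [Fintype V] [Fintype E] (D : Digraph' V E)
    (hsimple : D.NoParallel) (r : V) (hr : ∀ e, D.head e ≠ r)
    (x y : E → ℝ) (hx : ∀ e, 0 ≤ x e) (hy : ∀ e, 0 ≤ y e)
    (u : V) (hu : u ≠ r) (hlt : D.lamF r u y < D.lamF r u x) :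
    ∃ (e : E) (ε : ℝ), 0 < ε ∧ ε ≤ x e - y e ∧
      D.polygammoid r (D.head e) (y + ε • chi e) =
        {t : E → ℝ | ∃ s ∈ D.polygammoid r (D.head e) y,
          ∃ δ : ℝ, 0 ≤ δ ∧ δ ≤ ε ∧ t = s + δ • chi e} := by
  obtain ⟨W, m, hrW, huW, hm, hmy, sat1, sat2, hcap, hmval, hmin⟩ :=
    D.maxflow_mincut r u hu y hy (fun f h => absurd h (hr f))
  have h1 : D.lamF r u y = D.capOut y W := by rw [← hmval, hcap]
  have h2 : D.lamF r u x ≤ D.capOut x W := D.lamF_le_capOut hx W hrW huW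
  have hcaplt : D.capOut y W < D.capOut x W := by
    rw [← h1]; exact lt_of_lt_of_le hlt h2
  have hex : ∃ e, D.tail e ∈ W ∧ D.head e ∉ W ∧ y e < x e := by
    by_contra hcon
    push_neg at hcon
    have hcomp : D.capOut x W ≤ D.capOut y W := by
      unfold capOut
      apply Finset.sum_le_sum
      intro f _
      by_cases h : D.tail f ∈ W ∧ D.head f ∉ W
      · rw [if_pos h, if_pos h]; exact hcon f h.1 h.2
      · rw [if_neg h, if_neg h]
    linarith
  obtain ⟨e, heW, hevW, hxy⟩ := hex
  have hvr : D.head e ≠ r := hr e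
  have hne : D.tail e ≠ D.head e := fun h => hevW (h ▸ heW)
  by_cases hte : D.tail e = r
  · refine ⟨e, x e - y e, by linarith, le_rfl, ?_⟩
    ext tt
    constructor
    · rintro ⟨z, hz, hzc, rfl⟩
      exact D.reduce_flow hr hy e (by linarith) hz hzc
    · rintro ⟨s, ⟨z, hz, hzy, rfl⟩, δ, hδ0, hδε, rfl⟩
      exact D.augment_flow hr hy e (by linarith) hne (fun h => absurd hte h) hz hzy hδ0 hδε
  · obtain ⟨ε₀, hε₀pos, hbound⟩ :=
      D.exists_eps hy hm hmy hrW huW hevW sat1 sat2 hmin heW hte hvr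
    refine ⟨e, min (x e - y e) ε₀, lt_min (by linarith) hε₀pos, min_le_left _ _, ?_⟩
    ext tt
    constructor
    · rintro ⟨z, hz, hzc, rfl⟩
      exact D.reduce_flow hr hy e (le_of_lt (lt_min (by linarith) hε₀pos)) hz hzc
    · rintro ⟨s, ⟨z, hz, hzy, rfl⟩, δ, hδ0, hδε, rfl⟩
      refine D.augment_flow hr hy e (lt_min (by linarith) hε₀pos) hne ?_ hz hzy hδ0 hδε
      intro _ z' hz' hzy' S hS1 hS2 hS3
      exact le_trans (min_le_right _ _) (hbound z' hz' hzy' S hS1 hS2 hS3)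
end
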